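/- arXiv:0802.2836 — 8 statements merged into one kernel-verified Lean document; each statement's English description precedes it below -/
import Mathlib

section
/- Let α > 1, let k be a positive integer, and let G = (U, V, E) be a bipartite graph in which every induced matching has size at most k/α. Consider the 4-layer WGP instance built from G (interference radius d_I = 1) with m = (1 − 1/α)^{-1}·(1 + k/α)·(2k+1)·k packets, all with origin o, released in groups of k, the h-th group at time (k+1)h for h = 0, …, m/k − 1. Then every feasible schedule for this instance has maximum flow time at least (2k+1)·k. -/
/-- An instance of the Wireless Gathering Problem. -/
structure WGPInstance (V J : Type*) where
  /-- the communication graph -/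
  G : SimpleGraph V
  /-- the sink -/
  s : V
  /-- the interference radius -/
  dI : ℕ
  /-- origins of the packets -/
  o : J → V
  /-- release dates of the packets -/
  r : J → ℕ

namespace WGPInstance

variable {V J : Type*}

/-- Two calls `(u,v)` and `(u',v')` occurring in the same round interfere if
`d(u',v) ≤ d_I` or `d(u,v') ≤ d_I`. -/
def Interferes (I : WGPInstance V J) (u v u' v' : V) : Prop :=
  I.G.edist u' v ≤ I.dI ∨ I.G.edist u v' ≤ I.dI

/-- A feasible (unit-speed) schedule: `x j t` is the node holding packet `j` at round `t`.
Packets sit at their origin until their release date, move along edges of `G`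
(the transition from `x j t` to `x j (t+1)` being a call of round `t`), calls of a round
are pairwise non-interfering and have distinct senders, and every packet reaches the sink. -/
def Feasible (I : WGPInstance V J) (x : J → ℕ → V) : Prop :=
  (∀ j t, t ≤ I.r j → x j t = I.o j) ∧
  (∀ j t, x j (t + 1) = x j t ∨ I.G.Adj (x j t) (x j (t + 1))) ∧
  (∀ j k t, j ≠ k → x j (t + 1) ≠ x j t → x k (t + 1) ≠ x k t →
    x j t ≠ x k t ∧ ¬ I.Interferes (x j t) (x j (t + 1)) (x k t) (x k (t + 1))) ∧
  (∀ j, ∃ t, x j t = I.s)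

/-- The completion time of packet `j`: the first round `t ≥ r_j` with `x j t = s`. -/
noncomputable def completion (I : WGPInstance V J) (x : J → ℕ → V) (j : J) : ℕ :=
  sInf {t | I.r j ≤ t ∧ x j t = I.s}

/-- The flow time of packet `j`: `F_j = C_j - r_j`. -/
noncomputable def flow (I : WGPInstance V J) (x : J → ℕ → V) (j : J) : ℕ :=
  I.completion x j - I.r j

/-- Packet `j` is available (active) at round `t` if it has been released and
has not yet reached the sink. -/
def Active (I : WGPInstance V J) (x : J → ℕ → V) (j : J) (t : ℕ) : Prop :=
  I.r j ≤ t ∧ x j t ≠ I.s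

/-- `x` is a schedule that a Priority Greedy algorithm with priority function `prio`
(lower `prio`-value = higher priority) may produce: packets that reached the sink stay
there; every call moves an active packet one step along a shortest path to the sink;
and an active packet is left in place only if every such shortest-path step would
interfere with the call of some higher-priority packet of that round. -/
def PriorityGreedy (I : WGPInstance V J) (prio : J → ℕ) (x : J → ℕ → V) : Prop :=
  Function.Injective prio ∧
  (∀ j t, x j t = I.s → x j (t + 1) = I.s) ∧
  (∀ j t, x j (t + 1) ≠ x j t →
    I.Active x j t ∧ I.G.dist (x j (t + 1)) I.s + 1 = I.G.dist (x j t) I.s) ∧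
  (∀ j t, I.Active x j t → x j (t + 1) = x j t →
    ∀ v, I.G.Adj (x j t) v → I.G.dist v I.s + 1 = I.G.dist (x j t) I.s →
      ∃ k, prio k < prio j ∧ x k (t + 1) ≠ x k t ∧
        I.Interferes (x j t) v (x k t) (x k (t + 1)))

/-- FIFO is the Priority Greedy algorithm in which packets with earlier release dates
have higher priority (ties broken arbitrarily). -/
def FIFO (I : WGPInstance V J) (x : J → ℕ → V) : Prop :=
  ∃ prio : J → ℕ, (∀ j k, I.r j < I.r k → prio j < prio k) ∧ I.PriorityGreedy prio x

end WGPInstance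

/-- The vertices of the 4-layer network built from a bipartite graph with parts `U`
and `W`: a source `src`, the two middle layers `left u` (`u ∈ U`) and `right w`
(`w ∈ W`), and a sink `sink`. -/
inductive Layer (U W : Type*) where
  | src : Layer U W
  | left : U → Layer U W
  | right : W → Layer U W
  | sink : Layer U W

/-- The 4-layer graph built from a bipartite graph `(U, W, E)`: `U` and `W` are made
into cliques, `src` is adjacent to every node of `U`, `sink` is adjacent to every node
of `W`, and the edges between `U` and `W` are exactly those of `E`. -/
def fourLayerGraph {U W : Type*} (E : U → W → Prop) : SimpleGraph (Layer U W) :=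
  SimpleGraph.fromRel fun a b =>
    match a, b with
    | .src, .left _ => True
    | .left _, .left _ => True
    | .left u, .right w => E u w
    | .right _, .right _ => True
    | .right _, .sink => True
    | _, _ => False

/-- The 4-layer WGP instance built from a bipartite graph `(U, W, E)`: interference
radius `d_I = 1`, `m` packets all with origin `src`, released in groups of `k`, the
`h`-th group at time `(k+1)·h`. -/
def fourLayerInstance {U W : Type*} (E : U → W → Prop) (k m : ℕ) :
    WGPInstance (Layer U W) (Fin m) where
  G := fourLayerGraph E
  s := .sink
  dI := 1
  o := fun _ => .src
  r := fun j => (k + 1) * ((j : ℕ) / k)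

/-- `M` is an induced matching of the bipartite graph `(U, W, E)`: its elements are
edges, no two of them share an endpoint, and no edge of the graph joins two of them. -/
def IsBipartiteInducedMatching {U W : Type*} (E : U → W → Prop)
    (M : Finset (U × W)) : Prop :=
  (∀ p ∈ M, E p.1 p.2) ∧
  ∀ p ∈ M, ∀ q ∈ M, p ≠ q →
    p.1 ≠ q.1 ∧ p.2 ≠ q.2 ∧ ¬ E p.1 q.2 ∧ ¬ E q.1 p.2

section AuxLemmas

/-- Is the vertex on the "right side" (a `right` vertex or the sink)? -/
def Layer.isR {U W : Type*} : Layer U W → Bool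
  | .right _ => true
  | .sink => true
  | _ => false

variable {U W : Type*} {E : U → W → Prop}

lemma fourLayer_adj_left_right {u : U} {w : W} :
    (fourLayerGraph E).Adj (.left u) (.right w) ↔ E u w := by
  simp [fourLayerGraph, SimpleGraph.fromRel_adj]

lemma fourLayer_adj_right_right {w w' : W} (h : w ≠ w') :
    (fourLayerGraph E).Adj (.right w) (.right w') := by
  simp [fourLayerGraph, SimpleGraph.fromRel_adj, h]

lemma fourLayer_adj_to_sink {v : Layer U W} (h : (fourLayerGraph E).Adj v .sink) :
    ∃ w, v = Layer.right w := by
  cases v <;> simp_all [fourLayerGraph, SimpleGraph.fromRel_adj]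

lemma fourLayer_isR_cross {a b : Layer U W} (h : (fourLayerGraph E).Adj a b)
    (ha : a.isR = false) (hb : b.isR = true) :
    ∃ u w, a = Layer.left u ∧ b = Layer.right w ∧ E u w := by
  cases a <;> cases b <;> simp_all [Layer.isR, fourLayerGraph, SimpleGraph.fromRel_adj]

lemma edist_le_one_of_adj {V : Type*} {G : SimpleGraph V} {a b : V} (h : G.Adj a b) :
    G.edist a b ≤ 1 :=
  (SimpleGraph.edist_eq_one_iff_adj.2 h).le

lemma exists_crossing_step (y : ℕ → Layer U W)
    (hstep : ∀ t, y (t+1) = y t ∨ (fourLayerGraph E).Adj (y t) (y (t+1)))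
    (n : ℕ) (h0 : y 0 = Layer.src) (hn : y n = Layer.sink) :
    ∃ t, t < n ∧ ∃ u w, y t = Layer.left u ∧ y (t+1) = Layer.right w := by
  have h0' : (y 0).isR = false := by rw [h0]; rfl
  have hn' : (y n).isR = true := by rw [hn]; rfl
  clear h0 hn
  induction n with
  | zero => rw [h0'] at hn'; exact absurd hn' (by simp)
  | succ n ih =>
    by_cases h : (y n).isR = true
    · obtain ⟨t, ht, hrest⟩ := ih h
      exact ⟨t, ht.trans (Nat.lt_succ_self n), hrest⟩
    · have h' : (y n).isR = false := by simpa using h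
      rcases hstep n with he | ha
      · rw [he] at hn'; exact absurd hn' h
      · obtain ⟨u, w, hu, hw, _⟩ := fourLayer_isR_cross ha h' hn'
        exact ⟨n, Nat.lt_succ_self n, u, w, hu, hw⟩

end AuxLemmas

open WGPInstance in
/-- If every induced matching of the bipartite graph `(U, W, E)` has size at most `k/α`
(`α > 1`, `k ≥ 1`), then every feasible schedule of the 4-layer WGP instance built from
it, with `m = (1 − 1/α)⁻¹·(1 + k/α)·(2k+1)·k` packets released in groups of `k`, the
`h`-th group at time `(k+1)h`, has maximum flow time at least `(2k+1)·k`. -/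
theorem fourLayer_flow_lower_bound {U W : Type*} (E : U → W → Prop)
    (α : ℝ) (hα : 1 < α) (k m : ℕ) (hk : 1 ≤ k) (hkm : k ∣ m)
    (hm : (m : ℝ) = (1 - 1 / α)⁻¹ * (1 + k / α) * (2 * k + 1) * k)
    (hmatch : ∀ M : Finset (U × W), IsBipartiteInducedMatching E M →
      (M.card : ℝ) ≤ k / α)
    (x : Fin m → ℕ → Layer U W) (hx : (fourLayerInstance E k m).Feasible x) :
    (2 * k + 1) * k ≤ Finset.univ.sup ((fourLayerInstance E k m).flow x) := by
  by_contra hcon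
  push_neg at hcon
  obtain ⟨hx0, hx1, hx2, hx3⟩ := hx
  have hGr : (fourLayerInstance E k m).G = fourLayerGraph E := rfl
  have hs : (fourLayerInstance E k m).s = Layer.sink := rfl
  have hdI : (fourLayerInstance E k m).dI = 1 := rfl
  have ho : ∀ j, (fourLayerInstance E k m).o j = Layer.src := fun _ => rfl
  have hr : ∀ j : Fin m, (fourLayerInstance E k m).r j = (k+1) * ((j:ℕ)/k) := fun _ => rfl
  -- positivity facts
  have hα0 : (0:ℝ) < α := by linarith
  have hk0 : (0:ℝ) < (k:ℝ) := by exact_mod_cast hk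
  have h1 : (0:ℝ) < 1 - 1/α := by
    have : 1/α < 1 := by rw [div_lt_one hα0]; exact hα
    linarith
  have hmpos : 0 < m := by
    by_contra h
    push_neg at h
    interval_cases m
    have hrhs : (0:ℝ) < (1 - 1/α)⁻¹ * (1 + (k:ℝ)/α) * (2*(k:ℝ)+1) * k := by
      apply mul_pos (mul_pos (mul_pos (inv_pos.2 h1) (by positivity)) (by positivity)) hk0
    rw [← hm] at hrhs
    simp at hrhs
  obtain ⟨q, hq⟩ := hkm
  have hq1 : 1 ≤ q := by
    rcases Nat.eq_zero_or_pos q with h | h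
    · rw [h, Nat.mul_zero] at hq; omega
    · exact h
  set F : ℕ := (2*k+1)*k with hF
  set R : ℕ := (k+1)*(q-1) with hR
  set T : ℕ := R + F with hT
  set C : Fin m → ℕ := fun j => (fourLayerInstance E k m).completion x j with hC
  -- basic completion facts
  have hxsrc : ∀ j : Fin m, ∀ t, t ≤ (fourLayerInstance E k m).r j → x j t = Layer.src := by
    intro j t ht; rw [← ho j]; exact hx0 j t ht
  have hCmem : ∀ j, (fourLayerInstance E k m).r j ≤ C j ∧ x j (C j) = Layer.sink := by
    intro j
    have hne : {t | (fourLayerInstance E k m).r j ≤ t ∧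
        x j t = (fourLayerInstance E k m).s}.Nonempty := by
      obtain ⟨t, ht⟩ := hx3 j
      refine ⟨t, ?_, ht⟩
      by_contra h
      push_neg at h
      have h2 := hxsrc j t h.le
      rw [hs] at ht
      rw [ht] at h2
      cases h2
    have h3 : (fourLayerInstance E k m).r j ≤ C j ∧ x j (C j) = (fourLayerInstance E k m).s :=
      Nat.sInf_mem hne
    rw [hs] at h3
    exact h3
  have hCgt : ∀ j, (fourLayerInstance E k m).r j < C j := by
    intro j
    rcases Nat.lt_or_ge ((fourLayerInstance E k m).r j) (C j) with h | h
    · exact h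
    · exfalso
      have h' : C j = (fourLayerInstance E k m).r j := le_antisymm h (hCmem j).1
      have h2 := hxsrc j (C j) h'.le
      rw [(hCmem j).2] at h2
      cases h2
  have hCpos : ∀ j, 1 ≤ C j := fun j => by have := hCgt j; omega
  have hpre : ∀ j, x j (C j - 1) ≠ Layer.sink := by
    intro j h
    have hrle : (fourLayerInstance E k m).r j ≤ C j - 1 := by have := hCgt j; omega
    have hle : C j ≤ C j - 1 := Nat.sInf_le ⟨hrle, by rw [hs]; exact h⟩
    have := hCpos j
    omega
  -- upper bound on completion times
  have hCub : ∀ j, C j < (fourLayerInstance E k m).r j + F := by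
    intro j
    have h0' : (fourLayerInstance E k m).flow x j ≤
        Finset.univ.sup ((fourLayerInstance E k m).flow x) := Finset.le_sup (Finset.mem_univ j)
    have h1' : (fourLayerInstance E k m).completion x j - (fourLayerInstance E k m).r j < F :=
      lt_of_le_of_lt h0' hcon
    have h3' : C j = (fourLayerInstance E k m).completion x j := rfl
    have h2 := hCgt j
    omega
  have hrub : ∀ j : Fin m, (fourLayerInstance E k m).r j ≤ R := by
    intro j
    rw [hr]
    have hjq : (j:ℕ)/k < q := by
      rw [Nat.div_lt_iff_lt_mul (by omega : 0 < k)]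
      calc (j:ℕ) < m := j.2
        _ = q * k := by rw [hq]; ring
    exact Nat.mul_le_mul_left _ (by omega)
  have hCT : ∀ j, C j < T := fun j => by
    have := hCub j; have := hrub j; omega
  -- arrival rounds
  set fa : Fin m → ℕ := fun j => C j - 1 with hfa
  have hfa_move : ∀ j, x j (fa j + 1) = Layer.sink ∧ x j (fa j) ≠ Layer.sink := by
    intro j
    have h1' : fa j + 1 = C j := by have := hCpos j; simp only [hfa]; omega
    rw [h1']
    have h2 : fa j = C j - 1 := rfl
    rw [h2]
    exact ⟨(hCmem j).2, hpre j⟩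
  have hfa_inj : Function.Injective fa := by
    intro j j' h
    by_contra hne
    set t := fa j with htdef
    have hj := hfa_move j
    have hj' := hfa_move j'
    rw [← h] at hj'
    have hmj : x j (t+1) ≠ x j t := by rw [hj.1]; exact fun hc => hj.2 hc.symm
    have hmj' : x j' (t+1) ≠ x j' t := by rw [hj'.1]; exact fun hc => hj'.2 hc.symm
    have h2 := (hx2 j j' t hne hmj hmj').2
    apply h2
    rw [WGPInstance.Interferes, hGr, hdI]
    left
    rcases hx1 j' t with he | ha
    · exact absurd he hmj'
    · rw [hj'.1] at ha
      rw [hj.1]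
      exact edist_le_one_of_adj ha
  -- crossing rounds
  have hcross : ∀ j, ∃ t, t < C j ∧ ∃ u w, x j t = Layer.left u ∧ x j (t+1) = Layer.right w := by
    intro j
    exact exists_crossing_step (fun t => x j t) (fun t => hx1 j t) (C j)
      (hxsrc j 0 (Nat.zero_le _)) (hCmem j).2
  choose ct hct cu cw hcu hcw using hcross
  have hcE : ∀ j, E (cu j) (cw j) := by
    intro j
    rcases hx1 j (ct j) with he | ha
    · rw [hcu j, hcw j] at he; cases he
    · rw [hcu j, hcw j] at ha; exact fourLayer_adj_left_right.1 ha
  have hcmove : ∀ j, x j (ct j + 1) ≠ x j (ct j) := by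
    intro j h
    rw [hcu j, hcw j] at h; cases h
  -- fibers of ct map to induced matchings
  classical
  have hfiber : ∀ t, ((Finset.univ.filter (fun j => ct j = t)).card : ℝ) ≤ (k:ℝ)/α := by
    intro t
    set s := Finset.univ.filter (fun j : Fin m => ct j = t) with hsdef
    have hinj : Set.InjOn (fun j => (cu j, cw j)) s := by
      intro j hj j' hj' hpq
      by_contra hne
      have hjt : ct j = t := (Finset.mem_filter.1 hj).2
      have hj't : ct j' = t := (Finset.mem_filter.1 hj').2
      have hmj : x j (t+1) ≠ x j t := by rw [← hjt]; exact hcmove j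
      have hmj' : x j' (t+1) ≠ x j' t := by rw [← hj't]; exact hcmove j'
      have h2 := (hx2 j j' t hne hmj hmj').1
      apply h2
      have e1 : x j t = Layer.left (cu j) := by rw [← hjt]; exact hcu j
      have e2 : x j' t = Layer.left (cu j') := by rw [← hj't]; exact hcu j'
      rw [e1, e2]
      have : cu j = cu j' := congrArg Prod.fst hpq
      rw [this]
    set M := s.image (fun j => (cu j, cw j)) with hM
    have hcard : M.card = s.card := Finset.card_image_of_injOn hinj
    have hIM : IsBipartiteInducedMatching E M := by
      constructor
      · intro p hp
        obtain ⟨j, hj, hpj⟩ := Finset.mem_image.1 hp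
        rw [← hpj]
        exact hcE j
      · intro p hp p' hp' hne
        obtain ⟨j, hj, hpj⟩ := Finset.mem_image.1 hp
        obtain ⟨j', hj', hpj'⟩ := Finset.mem_image.1 hp'
        have hjne : j ≠ j' := by rintro rfl; rw [hpj] at hpj'; exact hne hpj'
        have hjt : ct j = t := (Finset.mem_filter.1 hj).2
        have hj't : ct j' = t := (Finset.mem_filter.1 hj').2
        have e1 : x j t = Layer.left (cu j) := by rw [← hjt]; exact hcu j
        have e2 : x j (t+1) = Layer.right (cw j) := by rw [← hjt]; exact hcw j
        have e3 : x j' t = Layer.left (cu j') := by rw [← hj't]; exact hcu j'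
        have e4 : x j' (t+1) = Layer.right (cw j') := by rw [← hj't]; exact hcw j'
        have hmj : x j (t+1) ≠ x j t := by rw [← hjt]; exact hcmove j
        have hmj' : x j' (t+1) ≠ x j' t := by rw [← hj't]; exact hcmove j'
        have h2 := hx2 j j' t hjne hmj hmj'
        have hsender : cu j ≠ cu j' := by
          intro hc
          apply h2.1
          rw [e1, e3, hc]
        have hni := h2.2
        rw [WGPInstance.Interferes, hGr, hdI] at hni
        push_neg at hni
        obtain ⟨hni1, hni2⟩ := hni
        rw [e3, e2] at hni1
        rw [e1, e4] at hni2
        have hE1 : ¬ E (cu j') (cw j) := by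
          intro hE
          exact absurd (edist_le_one_of_adj (fourLayer_adj_left_right.2 hE)) (not_le.2 hni1)
        have hE2 : ¬ E (cu j) (cw j') := by
          intro hE
          exact absurd (edist_le_one_of_adj (fourLayer_adj_left_right.2 hE)) (not_le.2 hni2)
        have hrecv : cw j ≠ cw j' := by
          intro hc
          rw [← hc] at hE2
          exact hE2 (hcE j)
        rw [← hpj, ← hpj']
        exact ⟨hsender, hrecv, hE2, hE1⟩
    calc ((s.card : ℕ) : ℝ) = (M.card : ℝ) := by rw [hcard]
      _ ≤ (k:ℝ)/α := hmatch M hIM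
  -- disjointness of arrival rounds and crossing rounds
  have hdisj : Disjoint (Finset.univ.image fa) (Finset.univ.image ct) := by
    rw [Finset.disjoint_left]
    intro t htA htB
    obtain ⟨j, _, hjt⟩ := Finset.mem_image.1 htA
    obtain ⟨j', _, hj't⟩ := Finset.mem_image.1 htB
    have hj := hfa_move j
    rw [hjt] at hj
    have e4 : x j' (t+1) = Layer.right (cw j') := by rw [← hj't]; exact hcw j'
    have hjne : j ≠ j' := by
      rintro rfl
      rw [e4] at hj
      cases hj.1
    have hmj : x j (t+1) ≠ x j t := by rw [hj.1]; exact fun hc => hj.2 hc.symm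
    have hmj' : x j' (t+1) ≠ x j' t := by rw [← hj't]; exact hcmove j'
    have h2 := (hx2 j j' t hjne hmj hmj').2
    apply h2
    rw [WGPInstance.Interferes, hGr, hdI]
    right
    rcases hx1 j t with he | ha
    · exact absurd he hmj
    · rw [hj.1] at ha
      obtain ⟨w'', hw''⟩ := fourLayer_adj_to_sink ha
      rw [hw'', e4]
      by_cases hww : w'' = cw j'
      · rw [hww]
        simp [SimpleGraph.edist_self]
      · exact edist_le_one_of_adj (fourLayer_adj_right_right hww)
  -- counting
  have hsub : (Finset.univ.image fa ∪ Finset.univ.image ct) ⊆ Finset.range T := by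
    intro t ht
    rw [Finset.mem_range]
    rcases Finset.mem_union.1 ht with h | h
    · obtain ⟨j, _, hjt⟩ := Finset.mem_image.1 h
      have h1' : fa j = C j - 1 := rfl
      have := hCT j
      omega
    · obtain ⟨j, _, hjt⟩ := Finset.mem_image.1 h
      have := hct j
      have := hCT j
      omega
  have hcardA : (Finset.univ.image fa).card = m := by
    rw [Finset.card_image_of_injective _ hfa_inj, Finset.card_univ, Fintype.card_fin]
  have hcount : m + (Finset.univ.image ct).card ≤ T := by
    have h1' := Finset.card_le_card hsub
    rw [Finset.card_union_of_disjoint hdisj, Finset.card_range, hcardA] at h1'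
    exact h1'
  -- lower bound on the number of crossing rounds
  have hsum : (m:ℝ) ≤ ((Finset.univ.image ct).card : ℝ) * ((k:ℝ)/α) := by
    have h1' : (Finset.univ : Finset (Fin m)).card =
        ∑ t ∈ Finset.univ.image ct, (Finset.univ.filter (fun j => ct j = t)).card :=
      Finset.card_eq_sum_card_fiberwise
        (fun j _ => Finset.mem_image_of_mem ct (Finset.mem_univ j))
    have h2' : m = ∑ t ∈ Finset.univ.image ct, (Finset.univ.filter (fun j => ct j = t)).card := by
      rw [← h1', Finset.card_univ, Fintype.card_fin]
    calc (m:ℝ) = ∑ t ∈ Finset.univ.image ct,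
          ((Finset.univ.filter (fun j => ct j = t)).card : ℝ) := by
          exact_mod_cast congrArg (Nat.cast (R := ℝ)) h2'
      _ ≤ ∑ t ∈ Finset.univ.image ct, ((k:ℝ)/α) := Finset.sum_le_sum (fun t _ => hfiber t)
      _ = ((Finset.univ.image ct).card : ℝ) * ((k:ℝ)/α) := by
          rw [Finset.sum_const, nsmul_eq_mul]
  -- final arithmetic
  have hαne : α ≠ 0 := ne_of_gt hα0
  have h1ne : (1:ℝ) - 1/α ≠ 0 := ne_of_gt h1
  have hden : ((α - 1) * α) ≠ 0 := ne_of_gt (mul_pos (by linarith) hα0)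
  have hfm : (m:ℝ) * (α - 1) = (α + k) * ((2*(k:ℝ)+1) * k) := by
    field_simp at hm
    exact mul_right_cancel₀ hαne (by rw [hm, div_mul_cancel₀ _ (sub_ne_zero.2 hα.ne')]; ring)
  have hBge : (m:ℝ) * α ≤ ((Finset.univ.image ct).card : ℝ) * k := by
    calc (m:ℝ)*α ≤ (((Finset.univ.image ct).card : ℝ) * ((k:ℝ)/α))*α :=
          mul_le_mul_of_nonneg_right hsum hα0.le
      _ = ((Finset.univ.image ct).card : ℝ) * k := by field_simp
  have hmq : (m:ℝ) = (k:ℝ) * q := by exact_mod_cast hq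
  have hTreal : (T:ℝ) = ((k:ℝ)+1)*((q:ℝ)-1) + ((2*(k:ℝ)+1)*(k:ℝ)) := by
    rw [hT, hR, hF]
    push_cast [Nat.cast_sub hq1]
    ring
  have hTge : (m:ℝ) + ((Finset.univ.image ct).card:ℝ) ≤ (T:ℝ) := by exact_mod_cast hcount
  have hTm : (T:ℝ)*k = ((k:ℝ)+1)*((m:ℝ)-k) + ((2*(k:ℝ)+1)*k)*k := by
    rw [hTreal]
    linear_combination (-((k:ℝ)+1)) * hmq
  have hstep : ((m:ℝ) + ((Finset.univ.image ct).card:ℝ))*k ≤ (T:ℝ)*k :=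
    mul_le_mul_of_nonneg_right hTge hk0.le
  nlinarith [hfm, hBge, hstep, hTm, mul_pos hα0 (by positivity : (0:ℝ) < (2*(k:ℝ)+1)*k)]
end

section
/- For every positive integer m divisible by 3 there exists a WGP instance with interference radius d_I = 1 and m packets such that: (i) every feasible schedule in which each packet is routed to the sink along a shortest path has maximum flow time at least 4m/3, while (ii) there exists a feasible schedule with maximum flow time at most 6. The instance: the graph consists of a node u, a node q, the sink s with path u–q–s, three nodes u_1, u_2, u_3 each adjacent to u, and for each i a private path of length 4 from u_i to s (through three internal nodes) disjoint from u and q; for each i ∈ {1,2,3} and each h = 0, …, m/3 − 1, one packet with origin u_i is released at time 5h. Hence no algorithm that routes packets along shortest paths can approximate the maximum flow time within a ratio better than Ω(m). -/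
/-- The vertices of the lower-bound instance for shortest-path routing: a hub `u`, an
intermediate node `q`, the sink `s`, three sources `src i` (`i < 3`), and for each `i`
three internal nodes `inner i 0, inner i 1, inner i 2` of a private path from `src i`
to `s`. -/
inductive SPNode where
  | u : SPNode
  | q : SPNode
  | s : SPNode
  | src : Fin 3 → SPNode
  | inner : Fin 3 → Fin 3 → SPNode

/-- The graph of the lower-bound instance: the path `u – q – s`; each `src i` adjacent
to `u`; and for each `i` the private path `src i – inner i 0 – inner i 1 – inner i 2 – s`
of length 4, disjoint from `u` and `q`. -/
def spGraph : SimpleGraph SPNode :=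
  SimpleGraph.fromRel fun a b =>
    match a, b with
    | .u, .q => True
    | .q, .s => True
    | .src _, .u => True
    | .src i, .inner i' p => i = i' ∧ (p : ℕ) = 0
    | .inner i p, .inner i' p' => i = i' ∧ (p : ℕ) + 1 = (p' : ℕ)
    | .inner _ p, .s => (p : ℕ) = 2
    | _, _ => False

/-- The lower-bound WGP instance: interference radius `d_I = 1`; for each `i ∈ {0,1,2}`
and each `h = 0, …, m/3 − 1`, one packet with origin `src i` is released at time `5h`
(packet `j` has origin `src (j mod 3)` and release date `5·⌊j/3⌋`). -/
def spInstance (m : ℕ) : WGPInstance SPNode (Fin m) where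
  G := spGraph
  s := .s
  dI := 1
  o := fun j => .src ⟨(j : ℕ) % 3, Nat.mod_lt _ (by norm_num)⟩
  r := fun j => 5 * ((j : ℕ) / 3)

/-- A schedule routes every packet along a shortest path: every call moves a packet one
step closer to the sink (so the sequence of nodes visited by each packet is a shortest
path in `G` from its origin to `s`). -/
def WGPInstance.ShortestPathRouted {V J : Type*} (I : WGPInstance V J)
    (x : J → ℕ → V) : Prop :=
  ∀ j t, x j (t + 1) ≠ x j t →
    I.G.dist (x j (t + 1)) I.s + 1 = I.G.dist (x j t) I.s


/- ### Auxiliary development -/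

deriving instance DecidableEq, Fintype for SPNode

instance : DecidableRel spGraph.Adj := fun a b => by
  rw [spGraph, SimpleGraph.fromRel_adj]
  cases a <;> cases b <;> dsimp only <;> infer_instance

/-- the intended distance to the sink -/
def phi : SPNode → ℕ
  | .u => 2
  | .q => 1
  | .s => 0
  | .src _ => 3
  | .inner _ p => 3 - (p : ℕ)

lemma phi_lip : ∀ a b : SPNode, spGraph.Adj a b → phi a ≤ phi b + 1 := by decide

lemma phi_le_walk' {a b : SPNode} (p : spGraph.Walk a b) : phi a ≤ p.length + phi b := by
  induction p with
  | nil => simp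
  | cons h p ih =>
      refine le_trans (phi_lip _ _ h) ?_
      simp only [SimpleGraph.Walk.length_cons]
      omega

lemma adj_qs : spGraph.Adj .q .s := by decide
lemma adj_uq : spGraph.Adj .u .q := by decide
lemma adj_su : ∀ i, spGraph.Adj (.src i) .u := by decide
lemma adj_01 : ∀ i, spGraph.Adj (.inner i 0) (.inner i 1) := by decide
lemma adj_12 : ∀ i, spGraph.Adj (.inner i 1) (.inner i 2) := by decide
lemma adj_2s : ∀ i, spGraph.Adj (.inner i 2) .s := by decide

def wQ : spGraph.Walk .q .s := .cons adj_qs .nil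
def wU : spGraph.Walk .u .s := .cons adj_uq wQ
def wSrc (i : Fin 3) : spGraph.Walk (.src i) .s := .cons (adj_su i) wU
def wI2 (i : Fin 3) : spGraph.Walk (.inner i 2) .s := .cons (adj_2s i) .nil
def wI1 (i : Fin 3) : spGraph.Walk (.inner i 1) .s := .cons (adj_12 i) (wI2 i)
def wI0 (i : Fin 3) : spGraph.Walk (.inner i 0) .s := .cons (adj_01 i) (wI1 i)

def wks : (a : SPNode) → spGraph.Walk a .s
  | .s => .nil
  | .q => wQ
  | .u => wU
  | .src i => wSrc i
  | .inner i p =>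
      if h2 : p = 2 then h2 ▸ wI2 i
      else if h1 : p = 1 then h1 ▸ wI1 i
      else (by omega : p = 0) ▸ wI0 i

lemma wks_length (a : SPNode) : (wks a).length = phi a := by
  match a with
  | .s => rfl
  | .q => rfl
  | .u => rfl
  | .src i => rfl
  | .inner i p => fin_cases p <;> rfl

lemma spDist (a : SPNode) : spGraph.dist a .s = phi a := by
  refine le_antisymm (wks_length a ▸ SimpleGraph.dist_le (wks a)) ?_
  obtain ⟨p, hp⟩ := SimpleGraph.Reachable.exists_walk_length_eq_dist (wks a).reachable
  have := phi_le_walk' p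
  rw [show phi SPNode.s = 0 from rfl] at this
  omega

lemma edist_le_one_iff (a b : SPNode) : spGraph.edist a b ≤ 1 ↔ a = b ∨ spGraph.Adj a b := by
  constructor
  · intro h
    rcases eq_or_ne (spGraph.edist a b) 0 with h0 | h0
    · exact Or.inl (SimpleGraph.edist_eq_zero_iff.mp h0)
    · exact Or.inr (SimpleGraph.edist_eq_one_iff_adj.mp
        (le_antisymm h (ENat.one_le_iff_ne_zero.mpr h0)))
  · rintro (rfl | h)
    · simp
    · exact le_of_eq (SimpleGraph.edist_eq_one_iff_adj.mpr h)

@[simp] lemma spInstance_G (m : ℕ) : (spInstance m).G = spGraph := rfl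
@[simp] lemma spInstance_s (m : ℕ) : (spInstance m).s = SPNode.s := rfl
@[simp] lemma spInstance_r (m : ℕ) (j : Fin m) : (spInstance m).r j = 5 * ((j : ℕ) / 3) := rfl

lemma interferes_iff (m : ℕ) (u v u' v' : SPNode) :
    (spInstance m).Interferes u v u' v' ↔
      ((u' = v ∨ spGraph.Adj u' v) ∨ (u = v' ∨ spGraph.Adj u v')) := by
  unfold WGPInstance.Interferes
  have h1 : ((spInstance m).dI : ℕ∞) = 1 := rfl
  rw [show (spInstance m).G = spGraph from rfl, h1, edist_le_one_iff, edist_le_one_iff]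

/- ### Part (i) auxiliary lemmas -/

lemma nbhd_src : ∀ (i : Fin 3) (w : SPNode), spGraph.Adj (.src i) w →
    w = .u ∨ w = .inner i 0 := by decide

lemma nbhd_u : ∀ w : SPNode, spGraph.Adj .u w → w = .q ∨ ∃ i, w = .src i := by decide

lemma nbhd_q : ∀ w : SPNode, spGraph.Adj .q w → w = .u ∨ w = .s := by decide

section Part1

variable {m : ℕ} {x : Fin m → ℕ → SPNode}

lemma spr_phi (hS : (spInstance m).ShortestPathRouted x) {j : Fin m} {t : ℕ}
    (h : x j (t + 1) ≠ x j t) : phi (x j (t + 1)) + 1 = phi (x j t) := by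
  have := hS j t h
  simpa only [spInstance_G, spInstance_s, spDist] using this

lemma spine (hF : (spInstance m).Feasible x) (hS : (spInstance m).ShortestPathRouted x)
    (j : Fin m) : ∀ t, (∃ i, x j t = .src i) ∨ x j t = .u ∨ x j t = .q ∨ x j t = .s := by
  intro t
  induction t with
  | zero => exact Or.inl ⟨_, hF.1 j 0 (Nat.zero_le _)⟩
  | succ t ih =>
      rcases eq_or_ne (x j (t + 1)) (x j t) with he | hne
      · rw [he]; exact ih
      · have hadj : spGraph.Adj (x j t) (x j (t + 1)) :=
          (hF.2.1 j t).resolve_left hne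
        have hphi := spr_phi hS hne
        rcases ih with ⟨i, hi⟩ | hu | hq | hs
        · rw [hi] at hadj hphi
          rcases nbhd_src i _ hadj with h | h
          · exact Or.inr (Or.inl h)
          · rw [h] at hphi; simp [phi] at hphi
        · rw [hu] at hadj hphi
          rcases nbhd_u _ hadj with h | ⟨i, h⟩
          · exact Or.inr (Or.inr (Or.inl h))
          · rw [h] at hphi; simp [phi] at hphi
        · rw [hq] at hadj hphi
          rcases nbhd_q _ hadj with h | h
          · rw [h] at hphi; simp [phi] at hphi
          · exact Or.inr (Or.inr (Or.inr h))
        · rw [hs] at hphi; simp [phi] at hphi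

lemma move_call (hF : (spInstance m).Feasible x) (hS : (spInstance m).ShortestPathRouted x)
    {j : Fin m} {t : ℕ} (hne : x j (t + 1) ≠ x j t) :
    ((∃ i, x j t = .src i) ∧ x j (t + 1) = .u) ∨
    (x j t = .u ∧ x j (t + 1) = .q) ∨
    (x j t = .q ∧ x j (t + 1) = .s) := by
  have hadj : spGraph.Adj (x j t) (x j (t + 1)) := (hF.2.1 j t).resolve_left hne
  have hphi := spr_phi hS hne
  rcases spine hF hS j t with ⟨i, hi⟩ | hu | hq | hs
  · rw [hi] at hadj hphi ⊢
    rcases nbhd_src i _ hadj with h | h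
    · exact Or.inl ⟨⟨i, rfl⟩, h⟩
    · rw [h] at hphi; simp [phi] at hphi
  · rw [hu] at hadj hphi ⊢
    rcases nbhd_u _ hadj with h | ⟨i, h⟩
    · exact Or.inr (Or.inl ⟨rfl, h⟩)
    · rw [h] at hphi; simp [phi] at hphi
  · rw [hq] at hadj hphi ⊢
    rcases nbhd_q _ hadj with h | h
    · rw [h] at hphi; simp [phi] at hphi
    · exact Or.inr (Or.inr ⟨rfl, h⟩)
  · rw [hs] at hphi; simp [phi] at hphi

/-- the set of rounds `< T` in which packet `j` moves -/
def moveset (x : Fin m → ℕ → SPNode) (j : Fin m) (T : ℕ) : Finset ℕ :=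
  (Finset.range T).filter (fun t => x j (t + 1) ≠ x j t)

lemma moveset_card (hF : (spInstance m).Feasible x)
    (hS : (spInstance m).ShortestPathRouted x) (j : Fin m) (T : ℕ) :
    phi (x j T) + (moveset x j T).card = 3 := by
  induction T with
  | zero =>
      have h0 : x j 0 = (spInstance m).o j := hF.1 j 0 (Nat.zero_le _)
      rw [h0]
      simp [moveset, spInstance, phi]
  | succ T ih =>
      have hms : moveset x j (T + 1) =
          if x j (T + 1) ≠ x j T then insert T (moveset x j T) else moveset x j T := by
        rw [moveset, Finset.range_add_one, Finset.filter_insert]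
        rfl
      rcases eq_or_ne (x j (T + 1)) (x j T) with he | hne
      · rw [hms, if_neg (by simpa using he), he]; exact ih
      · rw [hms, if_pos hne]
        have hTnot : T ∉ moveset x j T := by simp [moveset]
        rw [Finset.card_insert_of_notMem hTnot]
        have := spr_phi hS hne
        omega

lemma stays (hS : (spInstance m).ShortestPathRouted x) {j : Fin m} {t : ℕ}
    (h : x j t = .s) : ∀ d, x j (t + d) = .s := by
  intro d
  induction d with
  | zero => simpa using h
  | succ d ih =>
      by_contra hne
      have hne' : x j (t + d + 1) ≠ x j (t + d) := by rw [ih]; exact hne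
      have := spr_phi hS hne'
      rw [ih] at this
      simp [phi] at this

end Part1

/- ### Part (ii) auxiliary definitions and lemmas -/

/-- the finite position table for the fast schedule -/
def posF (i : Fin 3) (d : Fin 7) : SPNode :=
  match (i : ℕ), (d : ℕ) with
  | 0, 0 => .src 0
  | 0, 1 => .u
  | 0, 2 => .q
  | 0, _ => .s
  | 1, 0 => .src 1
  | 1, 1 => .src 1
  | 1, 2 => .inner 1 0
  | 1, 3 => .inner 1 1
  | 1, 4 => .inner 1 2
  | 1, _ => .s
  | 2, 0 => .src 2
  | 2, 1 => .src 2
  | 2, 2 => .src 2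
  | 2, 3 => .inner 2 0
  | 2, 4 => .inner 2 1
  | 2, 5 => .inner 2 2
  | _, _ => .s

def pos (i : Fin 3) (d : ℕ) : SPNode := posF i ⟨min d 6, by omega⟩

lemma pos_of_le (i : Fin 3) {d : ℕ} (h : d ≤ 6) :
    pos i d = posF i ⟨d, Nat.lt_succ_of_le h⟩ :=
  congrArg (posF i) (Fin.ext (Nat.min_eq_left h))

lemma pos_of_ge (i : Fin 3) {d : ℕ} (h : 6 ≤ d) : pos i d = posF i 6 :=
  congrArg (posF i) (Fin.ext (show min d 6 = 6 from Nat.min_eq_right h))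

lemma posF_zero : ∀ (i : Fin 3) (a : Fin 7), (a : ℕ) = 0 → posF i a = .src i := by decide
lemma posF_six : ∀ (i : Fin 3) (a : Fin 7), (a : ℕ) = 6 → posF i a = .s := by decide

lemma posF_step : ∀ (i : Fin 3) (a b : Fin 7), (b : ℕ) = (a : ℕ) + 1 →
    posF i b = posF i a ∨ spGraph.Adj (posF i a) (posF i b) := by decide

lemma posF_pair : ∀ (i i' : Fin 3) (a b a' b' : Fin 7),
    (b : ℕ) = (a : ℕ) + 1 → (b' : ℕ) = (a' : ℕ) + 1 →
    (((a : ℕ) = (a' : ℕ) ∧ i ≠ i') ∨ ((a : ℕ) = 5 ∧ (a' : ℕ) = 0) ∨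
      ((a : ℕ) = 0 ∧ (a' : ℕ) = 5)) →
    posF i b ≠ posF i a → posF i' b' ≠ posF i' a' →
    posF i a ≠ posF i' a' ∧
    ¬(((posF i' a' = posF i b) ∨ spGraph.Adj (posF i' a') (posF i b)) ∨
      ((posF i a = posF i' b') ∨ spGraph.Adj (posF i a) (posF i' b'))) := by decide

/-- the fast schedule -/
def sched (m : ℕ) (j : Fin m) (t : ℕ) : SPNode :=
  pos ⟨(j : ℕ) % 3, Nat.mod_lt _ (by norm_num)⟩ (t - 5 * ((j : ℕ) / 3))

open WGPInstance in
/-- For every positive `m` divisible by 3, in the instance `spInstance m` (with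
interference radius 1): (i) every feasible schedule routing all packets along shortest
paths has maximum flow time at least `4m/3`, while (ii) there is a feasible schedule
with maximum flow time at most `6`.  Hence no algorithm routing packets along shortest
paths approximates the maximum flow time within a ratio better than `Ω(m)`. -/
theorem shortestPath_routing_lower_bound (m : ℕ) (hm : 0 < m) (h3 : 3 ∣ m) :
    (∀ x : Fin m → ℕ → SPNode,
      (spInstance m).Feasible x → (spInstance m).ShortestPathRouted x →
      4 * m ≤ 3 * Finset.univ.sup ((spInstance m).flow x)) ∧
    (∃ x : Fin m → ℕ → SPNode,
      (spInstance m).Feasible x ∧ ∀ j, (spInstance m).flow x j ≤ 6) := by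
  obtain ⟨n, rfl⟩ := h3
  constructor
  · -- Part (i)
    intro x hF hS
    have hCmem : ∀ j : Fin (3 * n), (spInstance (3 * n)).r j ≤ (spInstance (3 * n)).completion x j ∧
        x j ((spInstance (3 * n)).completion x j) = SPNode.s := by
      intro j
      obtain ⟨t, ht⟩ := hF.2.2.2 j
      have hrt : (spInstance (3 * n)).r j ≤ t := by
        by_contra hlt
        have h0 := hF.1 j t (le_of_not_ge hlt)
        rw [ht] at h0
        simp [spInstance] at h0
      exact Nat.sInf_mem (⟨t, hrt, ht⟩ : {t | (spInstance (3 * n)).r j ≤ t ∧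
        x j t = (spInstance (3 * n)).s}.Nonempty)
    set T := Finset.univ.sup ((spInstance (3 * n)).completion x) with hTdef
    have hCT : ∀ j : Fin (3 * n), (spInstance (3 * n)).completion x j ≤ T :=
      fun j => Finset.le_sup (Finset.mem_univ j)
    have hxT : ∀ j : Fin (3 * n), x j T = SPNode.s := by
      intro j
      have h0 := stays hS (hCmem j).2 (T - (spInstance (3 * n)).completion x j)
      rwa [Nat.add_sub_cancel' (hCT j)] at h0
    have hcard : ∀ j : Fin (3 * n), (moveset x j T).card = 3 := by
      intro j
      have h0 := moveset_card hF hS j T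
      rw [hxT j] at h0
      simpa [phi] using h0
    have hdisj : ∀ j ∈ (Finset.univ : Finset (Fin (3 * n))), ∀ k ∈ Finset.univ, j ≠ k →
        Disjoint (moveset x j T) (moveset x k T) := by
      intro j _ k _ hjk
      rw [Finset.disjoint_left]
      intro t htj htk
      simp only [moveset, Finset.mem_filter, Finset.mem_range] at htj htk
      obtain ⟨hsend, hnint⟩ := hF.2.2.1 j k t hjk htj.2 htk.2
      refine hnint ?_
      rw [interferes_iff]
      rcases move_call hF hS htj.2 with ⟨⟨a, hj1⟩, hj2⟩ | ⟨hj1, hj2⟩ | ⟨hj1, hj2⟩ <;>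
        rcases move_call hF hS htk.2 with ⟨⟨b, hk1⟩, hk2⟩ | ⟨hk1, hk2⟩ | ⟨hk1, hk2⟩
      · exact Or.inl (Or.inr (by rw [hk1, hj2]; exact adj_su b))
      · exact Or.inl (Or.inl (hk1.trans hj2.symm))
      · exact Or.inl (Or.inr (by rw [hk1, hj2]; exact adj_uq.symm))
      · exact Or.inr (Or.inl (hj1.trans hk2.symm))
      · exact absurd (hj1.trans hk1.symm) hsend
      · exact Or.inl (Or.inl (hk1.trans hj2.symm))
      · exact Or.inr (Or.inr (by rw [hj1, hk2]; exact adj_uq.symm))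
      · exact Or.inr (Or.inl (hj1.trans hk2.symm))
      · exact absurd (hj1.trans hk1.symm) hsend
    have hcount : 3 * n * 3 ≤ T := by
      have h1 : (Finset.univ.biUnion (fun j : Fin (3 * n) => moveset x j T)).card =
          ∑ j : Fin (3 * n), (moveset x j T).card := Finset.card_biUnion hdisj
      have h2 : Finset.univ.biUnion (fun j : Fin (3 * n) => moveset x j T) ⊆ Finset.range T :=
        Finset.biUnion_subset.mpr fun j _ => Finset.filter_subset _ _
      have h3' := Finset.card_le_card h2
      have hsum : ∑ j : Fin (3 * n), (moveset x j T).card = 3 * n * 3 := by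
        rw [Finset.sum_congr rfl (fun j _ => hcard j)]
        simp [Finset.card_univ, mul_comm]
      rw [h1, hsum, Finset.card_range] at h3'
      exact h3'
    have hne : (Finset.univ : Finset (Fin (3 * n))).Nonempty := ⟨⟨0, hm⟩, Finset.mem_univ _⟩
    obtain ⟨j0, -, hj0⟩ := Finset.exists_mem_eq_sup Finset.univ hne
      ((spInstance (3 * n)).completion x)
    have hle : (spInstance (3 * n)).flow x j0 ≤
        Finset.univ.sup ((spInstance (3 * n)).flow x) := Finset.le_sup (Finset.mem_univ j0)
    have hfv : (spInstance (3 * n)).flow x j0 = T - 5 * ((j0 : ℕ) / 3) := by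
      unfold WGPInstance.flow
      rw [← hj0]
      rfl
    have hj0lt : (j0 : ℕ) < 3 * n := j0.isLt
    have hdm : 3 * ((j0 : ℕ) / 3) ≤ (j0 : ℕ) := Nat.mul_div_le _ 3
    omega
  · -- Part (ii)
    refine ⟨sched (3 * n), ⟨?_, ?_, ?_, ?_⟩, ?_⟩
    · intro j t ht
      have hle : t ≤ 5 * ((j : ℕ) / 3) := ht
      show pos ⟨(j : ℕ) % 3, Nat.mod_lt _ (by norm_num)⟩ (t - 5 * ((j : ℕ) / 3)) = _
      rw [Nat.sub_eq_zero_of_le hle, pos_of_le _ (by norm_num)]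
      exact posF_zero _ _ rfl
    · intro j t
      show pos ⟨(j : ℕ) % 3, Nat.mod_lt _ (by norm_num)⟩ (t + 1 - 5 * ((j : ℕ) / 3)) =
          pos ⟨(j : ℕ) % 3, Nat.mod_lt _ (by norm_num)⟩ (t - 5 * ((j : ℕ) / 3)) ∨
        spGraph.Adj (pos ⟨(j : ℕ) % 3, Nat.mod_lt _ (by norm_num)⟩ (t - 5 * ((j : ℕ) / 3)))
          (pos ⟨(j : ℕ) % 3, Nat.mod_lt _ (by norm_num)⟩ (t + 1 - 5 * ((j : ℕ) / 3)))
      set i : Fin 3 := ⟨(j : ℕ) % 3, Nat.mod_lt _ (by norm_num)⟩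
      rcases le_or_gt (5 * ((j : ℕ) / 3)) t with h | h
      · rw [show t + 1 - 5 * ((j : ℕ) / 3) = (t - 5 * ((j : ℕ) / 3)) + 1 by omega]
        set d := t - 5 * ((j : ℕ) / 3) with hd
        rcases le_or_gt 6 d with h6 | h6
        · left; rw [pos_of_ge i h6, pos_of_ge i (by omega)]
        · rw [pos_of_le i (by omega : d + 1 ≤ 6), pos_of_le i (by omega : d ≤ 6)]
          exact posF_step i ⟨d, by omega⟩ ⟨d + 1, by omega⟩ rfl
      · left
        rw [Nat.sub_eq_zero_of_le (by omega : t + 1 ≤ 5 * ((j : ℕ) / 3)),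
          Nat.sub_eq_zero_of_le (by omega : t ≤ 5 * ((j : ℕ) / 3))]
    · intro j k t hjk hmj hmk
      have hvne : (j : ℕ) ≠ (k : ℕ) := fun h => hjk (Fin.ext h)
      set ij : Fin 3 := ⟨(j : ℕ) % 3, Nat.mod_lt _ (by norm_num)⟩ with hijdef
      set ik : Fin 3 := ⟨(k : ℕ) % 3, Nat.mod_lt _ (by norm_num)⟩ with hikdef
      change pos ij (t + 1 - 5 * ((j : ℕ) / 3)) ≠ pos ij (t - 5 * ((j : ℕ) / 3)) at hmj
      change pos ik (t + 1 - 5 * ((k : ℕ) / 3)) ≠ pos ik (t - 5 * ((k : ℕ) / 3)) at hmk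
      have hrj : 5 * ((j : ℕ) / 3) ≤ t := by
        by_contra h
        rw [Nat.sub_eq_zero_of_le (by omega : t + 1 ≤ 5 * ((j : ℕ) / 3)),
          Nat.sub_eq_zero_of_le (by omega : t ≤ 5 * ((j : ℕ) / 3))] at hmj
        exact hmj rfl
      have hrk : 5 * ((k : ℕ) / 3) ≤ t := by
        by_contra h
        rw [Nat.sub_eq_zero_of_le (by omega : t + 1 ≤ 5 * ((k : ℕ) / 3)),
          Nat.sub_eq_zero_of_le (by omega : t ≤ 5 * ((k : ℕ) / 3))] at hmk
        exact hmk rfl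
      rw [show t + 1 - 5 * ((j : ℕ) / 3) = (t - 5 * ((j : ℕ) / 3)) + 1 by omega] at hmj
      rw [show t + 1 - 5 * ((k : ℕ) / 3) = (t - 5 * ((k : ℕ) / 3)) + 1 by omega] at hmk
      have hdj5 : t - 5 * ((j : ℕ) / 3) ≤ 5 := by
        by_contra h
        rw [pos_of_ge ij (by omega), pos_of_ge ij (by omega)] at hmj
        exact hmj rfl
      have hdk5 : t - 5 * ((k : ℕ) / 3) ≤ 5 := by
        by_contra h
        rw [pos_of_ge ik (by omega), pos_of_ge ik (by omega)] at hmk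
        exact hmk rfl
      rw [pos_of_le ij (by omega : (t - 5 * ((j : ℕ) / 3)) + 1 ≤ 6),
        pos_of_le ij (by omega : t - 5 * ((j : ℕ) / 3) ≤ 6)] at hmj
      rw [pos_of_le ik (by omega : (t - 5 * ((k : ℕ) / 3)) + 1 ≤ 6),
        pos_of_le ik (by omega : t - 5 * ((k : ℕ) / 3) ≤ 6)] at hmk
      have hcase : (((⟨t - 5 * ((j : ℕ) / 3), by omega⟩ : Fin 7) : ℕ) =
            ((⟨t - 5 * ((k : ℕ) / 3), by omega⟩ : Fin 7) : ℕ) ∧ ij ≠ ik) ∨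
          (((⟨t - 5 * ((j : ℕ) / 3), by omega⟩ : Fin 7) : ℕ) = 5 ∧
            ((⟨t - 5 * ((k : ℕ) / 3), by omega⟩ : Fin 7) : ℕ) = 0) ∨
          (((⟨t - 5 * ((j : ℕ) / 3), by omega⟩ : Fin 7) : ℕ) = 0 ∧
            ((⟨t - 5 * ((k : ℕ) / 3), by omega⟩ : Fin 7) : ℕ) = 5) := by
        rcases Nat.lt_trichotomy ((j : ℕ) / 3) ((k : ℕ) / 3) with hg | hg | hg
        · exact Or.inr (Or.inl ⟨show t - 5 * ((j : ℕ) / 3) = 5 by omega,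
            show t - 5 * ((k : ℕ) / 3) = 0 by omega⟩)
        · refine Or.inl ⟨show t - 5 * ((j : ℕ) / 3) = t - 5 * ((k : ℕ) / 3) by omega,
            fun h => ?_⟩
          have h' : (j : ℕ) % 3 = (k : ℕ) % 3 := congrArg Fin.val h
          omega
        · exact Or.inr (Or.inr ⟨show t - 5 * ((j : ℕ) / 3) = 0 by omega,
            show t - 5 * ((k : ℕ) / 3) = 5 by omega⟩)
      obtain ⟨h1, h2⟩ := posF_pair ij ik _ _ _ _ rfl rfl hcase hmj hmk
      refine ⟨?_, ?_⟩
      · show pos ij (t - 5 * ((j : ℕ) / 3)) ≠ pos ik (t - 5 * ((k : ℕ) / 3))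
        rw [pos_of_le ij (by omega), pos_of_le ik (by omega)]
        exact h1
      · show ¬ (spInstance (3 * n)).Interferes
          (pos ij (t - 5 * ((j : ℕ) / 3))) (pos ij (t + 1 - 5 * ((j : ℕ) / 3)))
          (pos ik (t - 5 * ((k : ℕ) / 3))) (pos ik (t + 1 - 5 * ((k : ℕ) / 3)))
        rw [show t + 1 - 5 * ((j : ℕ) / 3) = (t - 5 * ((j : ℕ) / 3)) + 1 by omega,
          show t + 1 - 5 * ((k : ℕ) / 3) = (t - 5 * ((k : ℕ) / 3)) + 1 by omega,
          pos_of_le ij (by omega : (t - 5 * ((j : ℕ) / 3)) + 1 ≤ 6),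
          pos_of_le ij (by omega : t - 5 * ((j : ℕ) / 3) ≤ 6),
          pos_of_le ik (by omega : (t - 5 * ((k : ℕ) / 3)) + 1 ≤ 6),
          pos_of_le ik (by omega : t - 5 * ((k : ℕ) / 3) ≤ 6),
          interferes_iff]
        exact h2
    · intro j
      refine ⟨5 * ((j : ℕ) / 3) + 6, ?_⟩
      show pos ⟨(j : ℕ) % 3, Nat.mod_lt _ (by norm_num)⟩
        (5 * ((j : ℕ) / 3) + 6 - 5 * ((j : ℕ) / 3)) = _
      rw [show 5 * ((j : ℕ) / 3) + 6 - 5 * ((j : ℕ) / 3) = 6 by omega,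
        pos_of_ge _ le_rfl]
      exact posF_six _ _ rfl
    · intro j
      have hxs : sched (3 * n) j (5 * ((j : ℕ) / 3) + 6) = (spInstance (3 * n)).s := by
        show pos ⟨(j : ℕ) % 3, Nat.mod_lt _ (by norm_num)⟩
          (5 * ((j : ℕ) / 3) + 6 - 5 * ((j : ℕ) / 3)) = _
        rw [show 5 * ((j : ℕ) / 3) + 6 - 5 * ((j : ℕ) / 3) = 6 by omega,
          pos_of_ge _ le_rfl]
        exact posF_six _ _ rfl
      have hmem : (5 * ((j : ℕ) / 3) + 6) ∈
          {t | (spInstance (3 * n)).r j ≤ t ∧ sched (3 * n) j t = (spInstance (3 * n)).s} :=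
        ⟨Nat.le_add_right _ 6, hxs⟩
      have hC : (spInstance (3 * n)).completion (sched (3 * n)) j ≤ 5 * ((j : ℕ) / 3) + 6 :=
        Nat.sInf_le hmem
      show (spInstance (3 * n)).completion (sched (3 * n)) j - (spInstance (3 * n)).r j ≤ 6
      have hr : (spInstance (3 * n)).r j = 5 * ((j : ℕ) / 3) := rfl
      omega
end

section
/- Consider any schedule produced by a Priority Greedy algorithm on a WGP instance. Then for each packet j, the completion time satisfies C_j ≤ R_{b(j)} + (γ/γ₀) · Σ_{i ∈ P(j)} π_i. -/
namespace WGPInstance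

variable {V J : Type*}

/-- Packet `j` is blocked at round `t`: it is available (released, not yet at the sink)
but is not sent in round `t`. -/
def Blocked (I : WGPInstance V J) (x : J → ℕ → V) (j : J) (t : ℕ) : Prop :=
  I.Active x j t ∧ x j (t + 1) = x j t

/-- `pred` is a valid blocking-forest parent function for the Priority Greedy schedule
`x` with priorities `prio`: `pred j = none` iff `j` is never blocked, and otherwise
`pred j` is a packet that, in the last round `tℓ` in which `j` is blocked, is sent, has
higher priority than `j`, and among all such packets is closest to `j`. -/
def IsBlockingParent (I : WGPInstance V J) (prio : J → ℕ) (x : J → ℕ → V)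
    (pred : J → Option J) : Prop :=
  (∀ j, pred j = none ↔ ∀ t, ¬ I.Blocked x j t) ∧
  ∀ j tℓ, IsGreatest {t | I.Blocked x j t} tℓ →
    ∃ k, pred j = some k ∧ prio k < prio j ∧ x k (tℓ + 1) ≠ x k tℓ ∧
      ∀ k', prio k' < prio j → x k' (tℓ + 1) ≠ x k' tℓ →
        I.G.dist (x k tℓ) (x j tℓ) ≤ I.G.dist (x k' tℓ) (x j tℓ)

end WGPInstance

section AuxWGP
open WGPInstance

variable {V J : Type*}

private lemma wgp_dist_triangle {G : SimpleGraph V} {u v w : V}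
    (h1 : G.Reachable u v) (h2 : G.Reachable v w) :
    G.dist u w ≤ G.dist u v + G.dist v w := by
  obtain ⟨p, hp⟩ := h1.exists_walk_length_eq_dist
  obtain ⟨q, hq⟩ := h2.exists_walk_length_eq_dist
  calc G.dist u w ≤ (p.append q).length := SimpleGraph.dist_le _
    _ = G.dist u v + G.dist v w := by rw [SimpleGraph.Walk.length_append, hp, hq]

private lemma wgp_dist_le_of_edist_le {G : SimpleGraph V} {u v : V} {n : ℕ}
    (h : G.edist u v ≤ (n : ℕ∞)) : G.dist u v ≤ n := by
  have h2 := ENat.toNat_le_toNat h (by simp)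
  simpa [SimpleGraph.dist] using h2

private lemma wgp_reachable_of_edist_le {G : SimpleGraph V} {u v : V} {n : ℕ}
    (h : G.edist u v ≤ (n : ℕ∞)) : G.Reachable u v := by
  refine SimpleGraph.reachable_of_edist_ne_top ?_
  intro htop
  rw [htop] at h
  simp at h

private lemma wgp_exists_step {G : SimpleGraph V} {u v : V}
    (h : G.Reachable u v) (hne : u ≠ v) :
    ∃ w, G.Adj u w ∧ G.dist w v + 1 = G.dist u v := by
  obtain ⟨p, hp⟩ := h.exists_walk_length_eq_dist
  cases p with
  | nil => exact absurd rfl hne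
  | cons hadj q =>
    rename_i w
    refine ⟨w, hadj, ?_⟩
    rw [SimpleGraph.Walk.length_cons] at hp
    have hdv : G.dist w v ≤ q.length := SimpleGraph.dist_le q
    have hge : G.dist u v ≤ G.dist w v + 1 := by
      obtain ⟨q', hq'⟩ := q.reachable.exists_walk_length_eq_dist
      have := SimpleGraph.dist_le (SimpleGraph.Walk.cons hadj q')
      rw [SimpleGraph.Walk.length_cons, hq'] at this
      omega
    omega

variable {I : WGPInstance V J} {prio : J → ℕ} {x : J → ℕ → V}

private lemma wgp_stay_le (hg : I.PriorityGreedy prio x) {j : J} {t t' : ℕ}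
    (htt : t ≤ t') (h : x j t = I.s) : x j t' = I.s := by
  induction t', htt using Nat.le_induction with
  | base => exact h
  | succ n hn ih => exact hg.2.1 j n ih

private lemma wgp_reach_le (hx : I.Feasible x) {j : J} {t t' : ℕ} (htt : t ≤ t') :
    I.G.Reachable (x j t) (x j t') := by
  induction t', htt using Nat.le_induction with
  | base => exact SimpleGraph.Reachable.refl _
  | succ n hn ih =>
    refine ih.trans ?_
    rcases hx.2.1 j n with h | h
    · rw [h]
    · exact h.reachable

private lemma wgp_reach (hx : I.Feasible x) (hg : I.PriorityGreedy prio x) (j : J) (t : ℕ) :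
    I.G.Reachable (x j t) I.s := by
  obtain ⟨t0, h0⟩ := hx.2.2.2 j
  have hs : x j (max t t0) = I.s := wgp_stay_le hg (le_max_right t t0) h0
  have := wgp_reach_le hx (j := j) (le_max_left t t0)
  rwa [hs] at this

private lemma wgp_dist_mono (hg : I.PriorityGreedy prio x) (j : J) (t : ℕ) :
    I.G.dist (x j (t + 1)) I.s ≤ I.G.dist (x j t) I.s := by
  by_cases h : x j (t + 1) = x j t
  · rw [h]
  · have := (hg.2.2.1 j t h).2
    omega

private lemma wgp_dist_anti (hg : I.PriorityGreedy prio x) {j : J} {t t' : ℕ} (htt : t ≤ t') :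
    I.G.dist (x j t') I.s ≤ I.G.dist (x j t) I.s := by
  induction t', htt using Nat.le_induction with
  | base => exact le_rfl
  | succ n hn ih => exact (wgp_dist_mono hg j n).trans ih

private lemma wgp_dist_le_delta (hx : I.Feasible x) (hg : I.PriorityGreedy prio x)
    {j : J} {t : ℕ} (ht : I.r j ≤ t) :
    I.G.dist (x j t) I.s ≤ I.G.dist (I.o j) I.s := by
  have := wgp_dist_anti hg (j := j) ht
  rwa [hx.1 j (I.r j) le_rfl] at this

private lemma wgp_comp_nonempty (hx : I.Feasible x) (hg : I.PriorityGreedy prio x) (j : J) :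
    {t | I.r j ≤ t ∧ x j t = I.s}.Nonempty := by
  obtain ⟨t0, h0⟩ := hx.2.2.2 j
  exact ⟨max (I.r j) t0, le_max_left _ _, wgp_stay_le hg (le_max_right _ _) h0⟩

private lemma wgp_comp_spec (hx : I.Feasible x) (hg : I.PriorityGreedy prio x) (j : J) :
    I.r j ≤ I.completion x j ∧ x j (I.completion x j) = I.s :=
  Nat.sInf_mem (wgp_comp_nonempty hx hg j)

private lemma wgp_comp_le {j : J} {t : ℕ} (h1 : I.r j ≤ t) (h2 : x j t = I.s) :
    I.completion x j ≤ t :=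
  Nat.sInf_le ⟨h1, h2⟩

private lemma wgp_lt_comp_of_active (hx : I.Feasible x) (hg : I.PriorityGreedy prio x)
    {j : J} {t : ℕ} (h : I.Active x j t) : t < I.completion x j := by
  by_contra hc
  push_neg at hc
  exact h.2 (wgp_stay_le hg hc (wgp_comp_spec hx hg j).2)

private lemma wgp_comp_le_of_unblocked (hx : I.Feasible x) (hg : I.PriorityGreedy prio x)
    {j : J} (n : ℕ) : ∀ t0 : ℕ, I.r j ≤ t0 → I.G.dist (x j t0) I.s ≤ n →
    (∀ t, t0 ≤ t → ¬ I.Blocked x j t) → I.completion x j ≤ t0 + n := by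
  induction n with
  | zero =>
    intro t0 h0 hd _
    by_cases hs : x j t0 = I.s
    · simpa using wgp_comp_le h0 hs
    · have := (wgp_reach hx hg j t0).pos_dist_of_ne hs
      omega
  | succ n ih =>
    intro t0 h0 hd hnb
    by_cases hs : x j t0 = I.s
    · have := wgp_comp_le h0 hs
      omega
    · have hact : I.Active x j t0 := ⟨h0, hs⟩
      have hmove : x j (t0 + 1) ≠ x j t0 := fun he => hnb t0 le_rfl ⟨hact, he⟩
      have hdd := (hg.2.2.1 j t0 hmove).2
      have := ih (t0 + 1) (by omega) (by omega) (fun t ht => hnb t (by omega))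
      omega

private lemma wgp_dist_lower (hx : I.Feasible x) (hg : I.PriorityGreedy prio x)
    {j : J} (m : ℕ) : ∀ t : ℕ, I.r j ≤ t → I.completion x j = t + m →
    I.G.dist (x j t) I.s ≤ m := by
  induction m with
  | zero =>
    intro t ht hc
    have h2 := (wgp_comp_spec hx hg j).2
    rw [hc] at h2
    simp only [Nat.add_zero] at h2
    rw [h2]
    simp [SimpleGraph.dist_self]
  | succ m ih =>
    intro t ht hc
    have h1 : I.G.dist (x j t) I.s ≤ I.G.dist (x j (t + 1)) I.s + 1 := by
      by_cases h : x j (t + 1) = x j t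
      · rw [h]; omega
      · have := (hg.2.2.1 j t h).2
        omega
    have h2 := ih (t + 1) (by omega) (by omega)
    omega

private lemma wgp_lb (hx : I.Feasible x) (hg : I.PriorityGreedy prio x)
    {j : J} {t : ℕ} (h1 : I.r j ≤ t) (h2 : t ≤ I.completion x j) :
    t + I.G.dist (x j t) I.s ≤ I.completion x j := by
  have := wgp_dist_lower hx hg (I.completion x j - t) t h1 (by omega)
  omega

private lemma wgp_exists_greatest (hx : I.Feasible x) (hg : I.PriorityGreedy prio x)
    {pred : J → Option J} (hpred : I.IsBlockingParent prio x pred)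
    {j k : J} (hk : pred j = some k) :
    ∃ tℓ, IsGreatest {t | I.Blocked x j t} tℓ := by
  have hne : ∃ t, I.Blocked x j t := by
    by_contra h
    push_neg at h
    rw [(hpred.1 j).mpr h] at hk
    cases hk
  have hbdd : BddAbove {t | I.Blocked x j t} := by
    refine ⟨I.completion x j, fun t ht => ?_⟩
    exact le_of_lt (wgp_lt_comp_of_active hx hg ht.1)
  refine ⟨sSup {t | I.Blocked x j t}, Nat.sSup_mem hne hbdd, fun t ht => le_csSup hbdd ht⟩

/-- Key step: if packet `j` has blocking parent `k`, then
`C_j ≤ C_k + d_I + 2` and `C_j ≤ C_k + δ_j`. -/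
private lemma wgp_step (hx : I.Feasible x) (hg : I.PriorityGreedy prio x)
    {pred : J → Option J} (hpred : I.IsBlockingParent prio x pred)
    {j k : J} (hk : pred j = some k) :
    I.completion x j ≤ I.completion x k + (I.dI + 2) ∧
    I.completion x j ≤ I.completion x k + I.G.dist (I.o j) I.s := by
  obtain ⟨tℓ, hgr⟩ := wgp_exists_greatest hx hg hpred hk
  obtain ⟨k0, hk0, hprio, hmove, hmin⟩ := hpred.2 j tℓ hgr
  rw [hk] at hk0
  obtain rfl : k = k0 := Option.some_inj.mp hk0
  have hblk : I.Blocked x j tℓ := hgr.1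
  have hact : I.Active x j tℓ := hblk.1
  have hstayj : x j (tℓ + 1) = x j tℓ := hblk.2
  -- j moves unobstructed after tℓ
  have hCj : I.completion x j ≤ tℓ + 1 + I.G.dist (x j tℓ) I.s := by
    have := wgp_comp_le_of_unblocked hx hg (I.G.dist (x j tℓ) I.s) (tℓ + 1)
      (hact.1.trans (by omega)) (by rw [hstayj])
      (fun t ht hb => by have := hgr.2 hb; omega)
    omega
  have hactk : I.Active x k tℓ := (hg.2.2.1 k tℓ hmove).1
  have hltk : tℓ < I.completion x k := wgp_lt_comp_of_active hx hg hactk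
  constructor
  · -- distance bound via interference
    have hreachj := wgp_reach hx hg j tℓ
    obtain ⟨w, hadj, heq⟩ := wgp_exists_step hreachj hact.2
    have hdistjk : I.G.dist (x k tℓ) (x j tℓ) ≤ I.dI + 1 := by
      obtain ⟨k', hpk', hmk', hintf⟩ := hg.2.2.2 j tℓ hact hstayj w hadj heq
      have hk'j : I.G.dist (x k' tℓ) (x j tℓ) ≤ I.dI + 1 := by
        cases hintf with
        | inl h =>
          have h1 : I.G.dist (x k' tℓ) w ≤ I.dI := wgp_dist_le_of_edist_le h
          have hr1 : I.G.Reachable (x k' tℓ) w := wgp_reachable_of_edist_le h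
          have hr2 : I.G.Reachable w (x j tℓ) := hadj.symm.reachable
          have h2 : I.G.dist w (x j tℓ) = 1 :=
            SimpleGraph.dist_eq_one_iff_adj.mpr hadj.symm
          have := wgp_dist_triangle hr1 hr2
          omega
        | inr h =>
          have h1 : I.G.dist (x j tℓ) (x k' (tℓ + 1)) ≤ I.dI := wgp_dist_le_of_edist_le h
          have hadj' : I.G.Adj (x k' tℓ) (x k' (tℓ + 1)) := by
            rcases hx.2.1 k' tℓ with he | ha
            · exact absurd he hmk'
            · exact ha
          have hr1 : I.G.Reachable (x k' tℓ) (x k' (tℓ + 1)) := hadj'.reachable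
          have hr2 : I.G.Reachable (x k' (tℓ + 1)) (x j tℓ) :=
            (wgp_reachable_of_edist_le h).symm
          have h2 : I.G.dist (x k' tℓ) (x k' (tℓ + 1)) = 1 :=
            SimpleGraph.dist_eq_one_iff_adj.mpr hadj'
          have h3 : I.G.dist (x k' (tℓ + 1)) (x j tℓ) ≤ I.dI := by
            rwa [SimpleGraph.dist_comm]
          have := wgp_dist_triangle hr1 hr2
          omega
      exact (hmin k' hpk' hmk').trans hk'j
    have t1 : I.G.dist (x j tℓ) I.s ≤
        I.G.dist (x j tℓ) (x k tℓ) + I.G.dist (x k tℓ) I.s :=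
      wgp_dist_triangle ((wgp_reach hx hg j tℓ).trans (wgp_reach hx hg k tℓ).symm)
        (wgp_reach hx hg k tℓ)
    have t2 : I.G.dist (x j tℓ) (x k tℓ) = I.G.dist (x k tℓ) (x j tℓ) :=
      SimpleGraph.dist_comm
    have t3 : tℓ + I.G.dist (x k tℓ) I.s ≤ I.completion x k :=
      wgp_lb hx hg hactk.1 (le_of_lt hltk)
    omega
  · have hδ := wgp_dist_le_delta hx hg hact.1
    omega

/-- The main induction, over the path from the root to `j` in the blocking forest. -/
private lemma wgp_main (hdI : 1 ≤ I.dI) (hx : I.Feasible x) (hg : I.PriorityGreedy prio x)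
    {pred : J → Option J} (hpred : I.IsBlockingParent prio x pred) :
    ∀ (L : List J) (hL : L ≠ []), pred (L.head hL) = none →
    L.Chain' (fun a b => pred b = some a) →
    ((I.completion x (L.getLast hL) : ℕ) : ℚ) ≤
      ((I.r (L.head hL) +
          (I.G.dist (I.o (L.head hL)) I.s
            - min (I.G.dist (I.o (L.head hL)) I.s) ((I.dI + 1) / 2)) : ℕ) : ℚ)
        + (I.dI + 2 : ℚ) / ((I.dI + 1) / 2 : ℕ) *
            (L.map fun i => ((min (I.G.dist (I.o i) I.s) ((I.dI + 1) / 2) : ℕ) : ℚ)).sum := by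
  -- basic arithmetic facts
  set g0 : ℕ := (I.dI + 1) / 2 with hg0def
  have hg0 : 1 ≤ g0 := by omega
  have hg0Q : (0 : ℚ) < (g0 : ℕ) := by exact_mod_cast hg0
  set q : ℚ := (I.dI + 2 : ℚ) / (g0 : ℕ) with hqdef
  have hq1 : (1 : ℚ) ≤ q := by
    rw [hqdef, le_div_iff₀ hg0Q, one_mul]
    have : (g0 : ℚ) ≤ (I.dI : ℚ) + 2 := by
      have : g0 ≤ I.dI + 2 := by omega
      exact_mod_cast this
    linarith
  have hqg : q * (g0 : ℚ) = (I.dI : ℚ) + 2 := div_mul_cancel₀ _ (ne_of_gt hg0Q)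
  intro L
  induction L using List.reverseRecOn with
  | nil => intro hL; exact absurd rfl hL
  | append_singleton l a ih =>
    intro hL hroot hchain
    rcases eq_or_ne l [] with rfl | hl
    · -- base case : L = [a], the root, never blocked
      simp only [List.nil_append] at *
      have hroot' : pred a = none := hroot
      have hnb : ∀ t, ¬ I.Blocked x a t := (hpred.1 a).mp hroot'
      have hCa : I.completion x a ≤ I.r a + I.G.dist (I.o a) I.s := by
        have := wgp_comp_le_of_unblocked hx hg (I.G.dist (x a (I.r a)) I.s) (I.r a)
          le_rfl le_rfl (fun t _ => hnb t)
        rw [hx.1 a (I.r a) le_rfl] at this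
        exact this
      simp only [List.head_cons, List.getLast_singleton, List.map_cons, List.map_nil,
        List.sum_cons, List.sum_nil, add_zero]
      set δ := I.G.dist (I.o a) I.s
      set π := min δ g0
      have hπδ : π ≤ δ := min_le_left _ _
      have h1 : ((I.completion x a : ℕ) : ℚ) ≤ ((I.r a + δ : ℕ) : ℚ) := by exact_mod_cast hCa
      have h2 : ((π : ℕ) : ℚ) ≤ q * ((π : ℕ) : ℚ) :=
        le_mul_of_one_le_left (by positivity) hq1
      have h3 : ((I.r a + (δ - π) : ℕ) : ℚ) + ((π : ℕ) : ℚ) = ((I.r a + δ : ℕ) : ℚ) := by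
        push_cast [Nat.sub_add_cancel hπδ]
        rw [Nat.cast_sub hπδ]
        ring
      linarith
    · -- inductive step
      have hhead : (l ++ [a]).head hL = l.head hl := List.head_append_of_ne_nil hl
      have hlast : (l ++ [a]).getLast hL = a := by simp
      have hlastl : l.getLast hl ∈ l.getLast? := by
        rw [List.getLast?_eq_getLast hl]; rfl
      obtain ⟨hchl, -, hrel⟩ := List.isChain_append.mp hchain
      have hpa : pred a = some (l.getLast hl) := hrel _ hlastl a rfl
      have hrootl : pred (l.head hl) = none := by rwa [hhead] at hroot
      have IH := ih hl hrootl hchl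
      set k := l.getLast hl
      obtain ⟨b1, b2⟩ := wgp_step hx hg hpred hpa
      -- C_a ≤ C_k + q * π_a  (rationally)
      set δa := I.G.dist (I.o a) I.s
      set πa := min δa g0 with hπadef
      have hstep : ((I.completion x a : ℕ) : ℚ) ≤
          ((I.completion x k : ℕ) : ℚ) + q * ((πa : ℕ) : ℚ) := by
        rcases le_or_gt g0 δa with hge | hlt
        · have hπa : πa = g0 := min_eq_right hge
          rw [hπa, hqg]
          have hcast : ((I.completion x a : ℕ) : ℚ) ≤
              ((I.completion x k : ℕ) : ℚ) + ((I.dI : ℚ) + 2) := by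
            exact_mod_cast b1
          linarith [hcast]
        · have hπa : πa = δa := min_eq_left (le_of_lt hlt)
          rw [hπa]
          have h1 : ((I.completion x a : ℕ) : ℚ) ≤
              ((I.completion x k : ℕ) : ℚ) + ((δa : ℕ) : ℚ) := by exact_mod_cast b2
          have h2 : ((δa : ℕ) : ℚ) ≤ q * ((δa : ℕ) : ℚ) :=
            le_mul_of_one_le_left (by positivity) hq1
          linarith
      rw [hhead, hlast]
      rw [List.map_append, List.sum_append]
      simp only [List.map_cons, List.map_nil, List.sum_cons, List.sum_nil, add_zero]
      rw [mul_add]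
      linarith [IH, hstep]

end AuxWGP

open WGPInstance in
/-- Upper bound on the completion times of a Priority Greedy schedule: for each packet
`j`, if `L = (b(j), …, j)` is the path from the root `b(j)` to `j` in the blocking
forest (so `P(j)` is the set of packets on `L`), then
`C_j ≤ R_{b(j)} + (γ/γ₀) · Σ_{i ∈ P(j)} π_i`, where `δ_i = d(o_i, s)`, `γ = d_I + 2`,
`γ₀ = ⌊(d_I+1)/2⌋`, `π_i = min {δ_i, γ₀}` and `R_i = r_i + δ_i − π_i`. -/
theorem priorityGreedy_completion_upper_bound {V J : Type*}
    (I : WGPInstance V J) (hdI : 1 ≤ I.dI) (prio : J → ℕ) (x : J → ℕ → V)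
    (hx : I.Feasible x) (hgreedy : I.PriorityGreedy prio x)
    (pred : J → Option J) (hpred : I.IsBlockingParent prio x pred)
    (j : J) (L : List J) (hL : L ≠ [])
    (hlast : L.getLast hL = j)
    (hroot : pred (L.head hL) = none)
    (hchain : L.Chain' fun a b => pred b = some a) :
    ((I.completion x j : ℕ) : ℚ) ≤
      ((I.r (L.head hL) +
          (I.G.dist (I.o (L.head hL)) I.s
            - min (I.G.dist (I.o (L.head hL)) I.s) ((I.dI + 1) / 2)) : ℕ) : ℚ)
        + (I.dI + 2 : ℚ) / ((I.dI + 1) / 2 : ℕ) *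
            (L.map fun i => ((min (I.G.dist (I.o i) I.s) ((I.dI + 1) / 2) : ℕ) : ℚ)).sum := by
  have := wgp_main hdI hx hgreedy hpred L hL hroot hchain
  rwa [hlast] at this
end

section
/- Let S ⊆ J be a nonempty set of packets of a WGP instance, and let C*_i denote the completion time of packet i in some feasible schedule. Then there exists a packet k ∈ S such that max_{i ∈ S} C*_i ≥ R_k + Σ_{i ∈ S} π_i. -/
/-- Discrete descent bound: if `f` decreases by at most one per step, then
`f a ≤ f t + (t - a)` for `a ≤ t`. -/
lemma wgp_descent (f : ℕ → ℕ) (hstep : ∀ t, f t ≤ f (t + 1) + 1) :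
    ∀ a t : ℕ, a ≤ t → f a ≤ f t + (t - a) := by
  intro a t h
  induction t, h using Nat.le_induction with
  | base => simp
  | succ n hn ih =>
    have := hstep n
    omega

/-- Discrete intermediate value: if `f` decreases by at most one per step,
`ℓ ≤ f a`, `f b < ℓ` and `a ≤ b`, then there is a crossing round. -/
lemma wgp_crossing (f : ℕ → ℕ) (hstep : ∀ t, f t ≤ f (t + 1) + 1)
    (a b ℓ : ℕ) (hab : a ≤ b) (ha : ℓ ≤ f a) (hb : f b < ℓ) :
    ∃ t, a ≤ t ∧ t + 1 ≤ b ∧ f t = ℓ ∧ f (t + 1) + 1 = ℓ := by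
  classical
  set A : Set ℕ := {t | a ≤ t ∧ f t < ℓ} with hA
  have hbA : b ∈ A := ⟨hab, hb⟩
  have hne : A.Nonempty := ⟨b, hbA⟩
  set N := sInf A with hN
  have hNmem : N ∈ A := Nat.sInf_mem hne
  have hNle : N ≤ b := Nat.sInf_le hbA
  have hNa : a ≤ N := hNmem.1
  have hNne : N ≠ a := by
    intro h
    have := hNmem.2
    rw [h] at this
    omega
  have hNpos : a < N := lt_of_le_of_ne hNa (Ne.symm hNne)
  have htn : N - 1 + 1 = N := by omega
  have htnot : N - 1 ∉ A := fun h => absurd (Nat.sInf_le h) (by omega)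
  have hft : ℓ ≤ f (N - 1) := by
    by_contra h
    exact htnot ⟨by omega, by omega⟩
  have h1 := hstep (N - 1)
  have h2 : f (N - 1 + 1) < ℓ := by rw [htn]; exact hNmem.2
  exact ⟨N - 1, by omega, by omega, by omega, by omega⟩

open WGPInstance in
/-- If `u` is adjacent to `v` and `v` can reach `w`, then `dist u w ≤ dist v w + 1`. -/
lemma wgp_dist_adj_le {V : Type*} {G : SimpleGraph V} {u v w : V}
    (hadj : G.Adj u v) (hr : G.Reachable v w) :
    G.dist u w ≤ G.dist v w + 1 := by
  obtain ⟨p, hp⟩ := hr.exists_walk_length_eq_dist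
  calc G.dist u w ≤ (SimpleGraph.Walk.cons hadj p).length := SimpleGraph.dist_le _
    _ = G.dist v w + 1 := by rw [SimpleGraph.Walk.length_cons, hp]

lemma wgp_edist_eq_dist {V : Type*} {G : SimpleGraph V} {u v : V}
    (hr : G.Reachable u v) : G.edist u v = (G.dist u v : ℕ∞) := by
  have h : G.edist u v ≠ ⊤ := SimpleGraph.edist_ne_top_iff_reachable.mpr hr
  rw [SimpleGraph.dist, ENat.coe_toNat h]

open WGPInstance in
/-- Lower bound lemma: for any nonempty set `S` of packets of a WGP instance and any
feasible schedule `y` with completion times `C*`, there is `k ∈ S` with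
`max_{i ∈ S} C*_i ≥ R_k + Σ_{i ∈ S} π_i`, where `δ_i = d(o_i, s)`,
`γ₀ = ⌊(d_I+1)/2⌋`, `π_i = min {δ_i, γ₀}` and `R_k = r_k + δ_k − π_k`. -/
theorem completion_lower_bound {V J : Type*} [Fintype J]
    (I : WGPInstance V J) (hdI : 1 ≤ I.dI) (y : J → ℕ → V) (hy : I.Feasible y)
    (S : Finset J) (hS : S.Nonempty) :
    ∃ k ∈ S,
      I.r k + (I.G.dist (I.o k) I.s - min (I.G.dist (I.o k) I.s) ((I.dI + 1) / 2))
        + ∑ i ∈ S, min (I.G.dist (I.o i) I.s) ((I.dI + 1) / 2)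
      ≤ S.sup (I.completion y) := by
  classical
  obtain ⟨hinit, hmove, hint, hreach⟩ := hy
  -- reachability along the trajectory
  have hchain : ∀ j a b, a ≤ b → I.G.Reachable (y j a) (y j b) := by
    intro j a b h
    induction b, h using Nat.le_induction with
    | base => exact SimpleGraph.Reachable.refl _
    | succ n hn ih =>
      rcases hmove j n with h' | h'
      · rwa [h']
      · exact ih.trans h'.reachable
  have hreachS : ∀ j t, I.G.Reachable (y j t) I.s := by
    intro j t
    obtain ⟨T, hT⟩ := hreach j
    rcases le_total t T with h | h
    · have := hchain j t T h; rwa [hT] at this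
    · have := hchain j T t h; rw [hT] at this; exact this.symm
  -- distance-to-sink decreases by at most one per step
  have hstep : ∀ j t, I.G.dist (y j t) I.s ≤ I.G.dist (y j (t + 1)) I.s + 1 := by
    intro j t
    rcases hmove j t with h | h
    · rw [h]; omega
    · exact wgp_dist_adj_le h (hreachS j (t + 1))
  -- completion times
  have hCmem : ∀ j, I.r j ≤ I.completion y j ∧ y j (I.completion y j) = I.s := by
    intro j
    have hne : {t | I.r j ≤ t ∧ y j t = I.s}.Nonempty := by
      obtain ⟨T, hT⟩ := hreach j
      rcases le_total (I.r j) T with h | h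
      · exact ⟨T, h, hT⟩
      · refine ⟨I.r j, le_rfl, ?_⟩
        have h1 := hinit j T h
        have h2 := hinit j (I.r j) le_rfl
        rw [h2, ← h1, hT]
    have := Nat.sInf_mem hne
    exact this
  have h2γ : 2 * ((I.dI + 1) / 2) ≤ I.dI + 1 := by omega
  have hγ1 : 1 ≤ (I.dI + 1) / 2 := by omega
  -- crossing rounds
  have hcross : ∀ i ℓ, ∃ t, i ∈ S → 1 ≤ ℓ →
      ℓ ≤ min (I.G.dist (I.o i) I.s) ((I.dI + 1) / 2) →
      I.r i ≤ t ∧ t + 1 ≤ I.completion y i ∧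
      I.G.dist (y i t) I.s = ℓ ∧ I.G.dist (y i (t + 1)) I.s + 1 = ℓ := by
    intro i ℓ
    by_cases h : i ∈ S ∧ 1 ≤ ℓ ∧ ℓ ≤ min (I.G.dist (I.o i) I.s) ((I.dI + 1) / 2)
    · obtain ⟨hiS, hℓ1, hℓπ⟩ := h
      have hfa : ℓ ≤ I.G.dist (y i (I.r i)) I.s := by
        rw [hinit i (I.r i) le_rfl]
        exact hℓπ.trans (min_le_left _ _)
      have hfb : I.G.dist (y i (I.completion y i)) I.s < ℓ := by
        rw [(hCmem i).2, SimpleGraph.dist_self]; omega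
      obtain ⟨t, h1, h2, h3, h4⟩ := wgp_crossing (fun u => I.G.dist (y i u) I.s)
        (hstep i) (I.r i) (I.completion y i) ℓ (hCmem i).1 hfa hfb
      exact ⟨t, fun _ _ _ => ⟨h1, h2, h3, h4⟩⟩
    · exact ⟨0, fun hiS hℓ1 hℓπ => absurd ⟨hiS, hℓ1, hℓπ⟩ h⟩
  choose g hg using hcross
  set Q : Finset (Σ _ : J, ℕ) :=
    S.sigma (fun i => Finset.Icc 1 (min (I.G.dist (I.o i) I.s) ((I.dI + 1) / 2))) with hQdef
  have hcardQ : Q.card = ∑ i ∈ S, min (I.G.dist (I.o i) I.s) ((I.dI + 1) / 2) := by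
    rw [hQdef, Finset.card_sigma]
    exact Finset.sum_congr rfl (fun i _ => by rw [Nat.card_Icc]; omega)
  have hmemQ : ∀ p : Σ _ : J, ℕ, p ∈ Q →
      p.1 ∈ S ∧ 1 ≤ p.2 ∧ p.2 ≤ min (I.G.dist (I.o p.1) I.s) ((I.dI + 1) / 2) := by
    intro p hp
    rw [hQdef, Finset.mem_sigma] at hp
    obtain ⟨h1, h2⟩ := hp
    obtain ⟨h3, h4⟩ := Finset.mem_Icc.mp h2
    exact ⟨h1, h3, h4⟩
  -- injectivity
  have hinjOn : Set.InjOn (fun p : Σ _ : J, ℕ => g p.1 p.2) ↑Q := by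
    rintro ⟨i, ℓ⟩ hp ⟨i', ℓ'⟩ hq h
    obtain ⟨hiS, hℓ1, hℓπ⟩ := hmemQ _ (Finset.mem_coe.mp hp)
    obtain ⟨hi'S, hℓ'1, hℓ'π⟩ := hmemQ _ (Finset.mem_coe.mp hq)
    have hgi := hg i ℓ hiS hℓ1 hℓπ
    have hgi' := hg i' ℓ' hi'S hℓ'1 hℓ'π
    have h' : g i ℓ = g i' ℓ' := h
    rw [← h'] at hgi'
    by_cases hii : i = i'
    · subst hii
      have : ℓ = ℓ' := by rw [← hgi.2.2.1, hgi'.2.2.1]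
      subst this; rfl
    · exfalso
      have hmi : y i (g i ℓ + 1) ≠ y i (g i ℓ) := by
        intro he
        have h1 := hgi.2.2.1
        have h2 := hgi.2.2.2
        rw [he] at h2; omega
      have hmi' : y i' (g i ℓ + 1) ≠ y i' (g i ℓ) := by
        intro he
        have h1 := hgi'.2.2.1
        have h2 := hgi'.2.2.2
        rw [he] at h2; omega
      obtain ⟨-, hni⟩ := hint i i' (g i ℓ) hii hmi hmi'
      apply hni
      have hr1 : I.G.edist (y i' (g i ℓ)) I.s
          = (I.G.dist (y i' (g i ℓ)) I.s : ℕ∞) := wgp_edist_eq_dist (hreachS i' (g i ℓ))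
      have hr2 : I.G.edist I.s (y i (g i ℓ + 1))
          = (I.G.dist (y i (g i ℓ + 1)) I.s : ℕ∞) := by
        rw [SimpleGraph.edist_comm]; exact wgp_edist_eq_dist (hreachS i (g i ℓ + 1))
      have hnat : I.G.dist (y i' (g i ℓ)) I.s + I.G.dist (y i (g i ℓ + 1)) I.s ≤ I.dI := by
        have e1 := hgi'.2.2.1
        have e2 := hgi.2.2.2
        have hb1 : ℓ ≤ (I.dI + 1) / 2 := hℓπ.trans (min_le_right _ _)
        have hb2 : ℓ' ≤ (I.dI + 1) / 2 := hℓ'π.trans (min_le_right _ _)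
        omega
      refine Or.inl ?_
      calc I.G.edist (y i' (g i ℓ)) (y i (g i ℓ + 1))
          ≤ I.G.edist (y i' (g i ℓ)) I.s + I.G.edist I.s (y i (g i ℓ + 1)) :=
            SimpleGraph.edist_triangle
        _ = ((I.G.dist (y i' (g i ℓ)) I.s + I.G.dist (y i (g i ℓ + 1)) I.s : ℕ) : ℕ∞) := by
            rw [hr1, hr2]; push_cast; rfl
        _ ≤ (I.dI : ℕ∞) := by exact_mod_cast hnat
  rcases Q.eq_empty_or_nonempty with hQe | hQne
  · -- degenerate case: all π i = 0
    obtain ⟨k, hk⟩ := hS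
    refine ⟨k, hk, ?_⟩
    have hπk : min (I.G.dist (I.o k) I.s) ((I.dI + 1) / 2) = 0 := by
      by_contra hcon
      have : (⟨k, 1⟩ : Σ _ : J, ℕ) ∈ Q := by
        rw [hQdef]
        refine Finset.mem_sigma.mpr ⟨hk, Finset.mem_Icc.mpr ⟨le_rfl, ?_⟩⟩
        show 1 ≤ min (I.G.dist (I.o k) I.s) ((I.dI + 1) / 2)
        omega
      rw [hQe] at this
      exact absurd this (Finset.notMem_empty _)
    have hsum : ∑ i ∈ S, min (I.G.dist (I.o i) I.s) ((I.dI + 1) / 2) = 0 := by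
      rw [← hcardQ, hQe, Finset.card_empty]
    have hrk := (hCmem k).1
    have hCk : I.completion y k ≤ S.sup (I.completion y) := Finset.le_sup hk
    omega
  · set T := Q.image (fun p : Σ _ : J, ℕ => g p.1 p.2) with hTdef
    have hTcard : T.card = ∑ i ∈ S, min (I.G.dist (I.o i) I.s) ((I.dI + 1) / 2) := by
      rw [hTdef, Finset.card_image_of_injOn hinjOn, hcardQ]
    have hTne : T.Nonempty := hQne.image _
    obtain ⟨p, hpQ, hpt⟩ := Finset.mem_image.mp (T.min'_mem hTne)
    obtain ⟨k, ℓ⟩ := p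
    obtain ⟨hkS, hℓ1, hℓπ⟩ := hmemQ _ hpQ
    have hℓ1' : 1 ≤ ℓ := hℓ1
    have hℓπ' : ℓ ≤ min (I.G.dist (I.o k) I.s) ((I.dI + 1) / 2) := hℓπ
    have hgk := hg k ℓ hkS hℓ1 hℓπ
    have hpt' : g k ℓ = T.min' hTne := hpt
    have hsub : T ⊆ Finset.Ico (T.min' hTne) (S.sup (I.completion y)) := by
      intro u hu
      obtain ⟨q, hqQ, hqu⟩ := Finset.mem_image.mp hu
      obtain ⟨hq1, hq2, hq3⟩ := hmemQ _ hqQ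
      have hgq := hg q.1 q.2 hq1 hq2 hq3
      have hqu' : g q.1 q.2 = u := hqu
      have hle : I.completion y q.1 ≤ S.sup (I.completion y) := Finset.le_sup hq1
      refine Finset.mem_Ico.mpr ⟨T.min'_le u hu, ?_⟩
      omega
    have hcard2 : T.card ≤ S.sup (I.completion y) - T.min' hTne := by
      have := Finset.card_le_card hsub
      rwa [Nat.card_Ico] at this
    have hdes := wgp_descent (fun u => I.G.dist (y k u) I.s) (hstep k) (I.r k) (g k ℓ) hgk.1
    have hDr : I.G.dist (y k (I.r k)) I.s = I.G.dist (I.o k) I.s := by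
      rw [hinit k (I.r k) le_rfl]
    have hDt : I.G.dist (y k (g k ℓ)) I.s = ℓ := hgk.2.2.1
    have hdes' : I.G.dist (I.o k) I.s ≤ ℓ + (g k ℓ - I.r k) := by
      have : I.G.dist (y k (I.r k)) I.s ≤ I.G.dist (y k (g k ℓ)) I.s + (g k ℓ - I.r k) := hdes
      omega
    have hQpos : 0 < Q.card := Finset.card_pos.mpr hQne
    have hrk := hgk.1
    refine ⟨k, hkS, ?_⟩
    omega
end

section
/- FIFO is a (1 + γ/γ₀)-approximation algorithm for the minimization of the maximum completion time in the Wireless Gathering Problem: for every WGP instance, the schedule produced by FIFO satisfies max_j C_j ≤ (1 + γ/γ₀) · max_j C*_j, where C*_j are the completion times in any feasible schedule. -/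
open SimpleGraph

namespace WGPaux

open WGPInstance

variable {V J : Type*}

lemma dist_tri {G : SimpleGraph V} {u v w : V} (h1 : G.Reachable u v) (h2 : G.Reachable v w) :
    G.dist u w ≤ G.dist u v + G.dist v w := by
  obtain ⟨p, hp⟩ := h1.exists_walk_length_eq_dist
  obtain ⟨q, hq⟩ := h2.exists_walk_length_eq_dist
  simpa [hp, hq] using dist_le (p.append q)

lemma dist_le_of_edist_le {G : SimpleGraph V} {u v : V} {n : ℕ} (h : G.edist u v ≤ n) :
    G.dist u v ≤ n := by
  have := ENat.toNat_le_toNat h (by simp)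
  simpa [SimpleGraph.dist] using this

lemma reachable_of_edist_le {G : SimpleGraph V} {u v : V} {n : ℕ} (h : G.edist u v ≤ n) :
    G.Reachable u v := by
  refine reachable_of_edist_ne_top ?_
  intro ht
  rw [ht] at h
  exact (by simp : ¬ (⊤ : ℕ∞) ≤ n) h

lemma edist_le_of_dist_le {G : SimpleGraph V} {u v : V} {n : ℕ} (h : G.dist u v ≤ n)
    (hr : G.Reachable u v) : G.edist u v ≤ n := by
  have ht : G.edist u v ≠ ⊤ := edist_ne_top_iff_reachable.mpr hr
  rw [← ENat.coe_toNat ht]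
  exact_mod_cast h

lemma adj_dist_le_one {G : SimpleGraph V} {u v : V} (h : G.Adj u v) : G.dist u v ≤ 1 := by
  simpa using dist_le h.toWalk

lemma exists_shortest_neighbor {G : SimpleGraph V} {u s : V} (hne : u ≠ s)
    (hr : G.Reachable u s) : ∃ v, G.Adj u v ∧ G.dist v s + 1 = G.dist u s := by
  obtain ⟨p, hp⟩ := hr.exists_walk_length_eq_dist
  cases p with
  | nil => exact absurd rfl hne
  | @cons _ v _ h q =>
    refine ⟨v, h, ?_⟩
    have hq : q.length + 1 = G.dist u s := by simpa using hp
    have h1 : G.dist v s ≤ q.length := dist_le q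
    have hvr : G.Reachable v s := ⟨q⟩
    obtain ⟨w, hw⟩ := hvr.exists_walk_length_eq_dist
    have h2 : G.dist u s ≤ G.dist v s + 1 := by
      have := dist_le (SimpleGraph.Walk.cons h w)
      simp only [SimpleGraph.Walk.length_cons, hw] at this
      omega
    omega

section sched

variable {I : WGPInstance V J} {z : J → ℕ → V}

lemma reach (hadj : ∀ j t, z j (t + 1) = z j t ∨ I.G.Adj (z j t) (z j (t + 1)))
    (hfin : ∀ j, ∃ t, z j t = I.s) (j : J) (t : ℕ) : I.G.Reachable (z j t) I.s := by
  have step : ∀ u, I.G.Reachable (z j u) (z j (u + 1)) := by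
    intro u
    rcases hadj j u with h | h
    · rw [h]
    · exact h.reachable
  have chain : ∀ a b, a ≤ b → I.G.Reachable (z j a) (z j b) := by
    intro a b hab
    induction b, hab using Nat.le_induction with
    | base => exact Reachable.refl _
    | succ n hn ih => exact ih.trans (step n)
  obtain ⟨t₀, ht₀⟩ := hfin j
  rcases le_total t t₀ with h | h
  · have := chain t t₀ h; rwa [ht₀] at this
  · have := chain t₀ t h; rw [ht₀] at this; exact this.symm

lemma dstep (hadj : ∀ j t, z j (t + 1) = z j t ∨ I.G.Adj (z j t) (z j (t + 1)))
    (hfin : ∀ j, ∃ t, z j t = I.s) (j : J) (t : ℕ) :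
    I.G.dist (z j t) I.s ≤ I.G.dist (z j (t + 1)) I.s + 1 := by
  rcases hadj j t with h | h
  · rw [h]; omega
  · have h1 : I.G.dist (z j t) (z j (t + 1)) ≤ 1 := adj_dist_le_one h
    have h2 := dist_tri h.reachable (reach hadj hfin j (t + 1))
    omega

lemma completion_spec (hrel : ∀ j t, t ≤ I.r j → z j t = I.o j)
    (hfin : ∀ j, ∃ t, z j t = I.s) (j : J) :
    I.r j ≤ I.completion z j ∧ z j (I.completion z j) = I.s := by
  have hne : {t | I.r j ≤ t ∧ z j t = I.s}.Nonempty := by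
    obtain ⟨t₀, ht₀⟩ := hfin j
    rcases le_or_gt (I.r j) t₀ with h | h
    · exact ⟨t₀, h, ht₀⟩
    · refine ⟨I.r j, le_rfl, ?_⟩
      rw [hrel j (I.r j) le_rfl, ← hrel j t₀ h.le, ht₀]
  exact Nat.sInf_mem hne

lemma completion_le {j : J} {t : ℕ} (h1 : I.r j ≤ t) (h2 : z j t = I.s) :
    I.completion z j ≤ t :=
  Nat.sInf_le ⟨h1, h2⟩

lemma deficit (hadj : ∀ j t, z j (t + 1) = z j t ∨ I.G.Adj (z j t) (z j (t + 1)))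
    (hfin : ∀ j, ∃ t, z j t = I.s) (hrel : ∀ j t, t ≤ I.r j → z j t = I.o j)
    (j : J) : ∀ t, t ≤ I.completion z j →
      I.G.dist (z j t) I.s + t ≤ I.completion z j := by
  have hC := (completion_spec hrel hfin j).2
  have key : ∀ k t, t + k = I.completion z j → I.G.dist (z j t) I.s ≤ k := by
    intro k
    induction k with
    | zero =>
      intro t ht
      have h : t = I.completion z j := by omega
      rw [h, hC]
      simp
    | succ k ih =>
      intro t ht
      have h1 := dstep hadj hfin j t
      have h2 := ih (t + 1) (by omega)
      omega
  intro t ht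
  have := key (I.completion z j - t) t (by omega)
  omega

lemma release_add_dist_le (hadj : ∀ j t, z j (t + 1) = z j t ∨ I.G.Adj (z j t) (z j (t + 1)))
    (hfin : ∀ j, ∃ t, z j t = I.s) (hrel : ∀ j t, t ≤ I.r j → z j t = I.o j) (j : J) :
    I.r j + I.G.dist (I.o j) I.s ≤ I.completion z j := by
  have h1 := (completion_spec hrel hfin j).1
  have h2 := deficit hadj hfin hrel j (I.r j) h1
  rw [hrel j (I.r j) le_rfl] at h2
  omega

end sched

end WGPaux

namespace WGPaux

open WGPInstance SimpleGraph

variable {V J : Type*}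

section greedy

variable {I : WGPInstance V J} {x : J → ℕ → V} {prio : J → ℕ}

lemma sink_stay (hsink : ∀ j t, x j t = I.s → x j (t + 1) = I.s)
    (hrel : ∀ j t, t ≤ I.r j → x j t = I.o j) (hfin : ∀ j, ∃ t, x j t = I.s)
    (j : J) : ∀ t, I.completion x j ≤ t → x j t = I.s := by
  intro t ht
  induction t, ht using Nat.le_induction with
  | base => exact (completion_spec hrel hfin j).2
  | succ n hn ih => exact hsink j n ih

lemma dist_le_origin
    (hmove : ∀ j t, x j (t + 1) ≠ x j t →
      I.Active x j t ∧ I.G.dist (x j (t + 1)) I.s + 1 = I.G.dist (x j t) I.s)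
    (hrel : ∀ j t, t ≤ I.r j → x j t = I.o j) (j : J) (t : ℕ) :
    I.G.dist (x j t) I.s ≤ I.G.dist (I.o j) I.s := by
  induction t with
  | zero => rw [hrel j 0 (Nat.zero_le _)]
  | succ n ih =>
    by_cases h : x j (n + 1) = x j n
    · rw [h]; exact ih
    · have := (hmove j n h).2; omega

lemma run_bound
    (hmove : ∀ j t, x j (t + 1) ≠ x j t →
      I.Active x j t ∧ I.G.dist (x j (t + 1)) I.s + 1 = I.G.dist (x j t) I.s)
    (hadj : ∀ j t, x j (t + 1) = x j t ∨ I.G.Adj (x j t) (x j (t + 1)))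
    (hfin : ∀ j, ∃ t, x j t = I.s)
    (j : J) (a : ℕ) (ha : I.r j ≤ a)
    (hmoves : ∀ u, a ≤ u → u < I.completion x j → x j (u + 1) ≠ x j u) :
    I.completion x j ≤ a + I.G.dist (x j a) I.s := by
  have key : ∀ k, a + k ≤ I.completion x j →
      I.G.dist (x j (a + k)) I.s + k = I.G.dist (x j a) I.s := by
    intro k
    induction k with
    | zero => simp
    | succ k ih =>
      intro hk
      have h1 := ih (by omega)
      have hmv := hmoves (a + k) (by omega) (by omega)
      have h2 := (hmove j (a + k) hmv).2
      have h3 : a + (k + 1) = (a + k) + 1 := by omega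
      rw [h3]
      omega
  rcases le_or_gt (a + I.G.dist (x j a) I.s) (I.completion x j) with h | h
  · have h0 := key _ h
    have h4 : I.G.dist (x j (a + I.G.dist (x j a) I.s)) I.s = 0 := by omega
    have hre := reach hadj hfin j (a + I.G.dist (x j a) I.s)
    have hs : x j (a + I.G.dist (x j a) I.s) = I.s := by
      rcases dist_eq_zero_iff_eq_or_not_reachable.mp h4 with h' | h'
      · exact h'
      · exact absurd hre h'
    exact completion_le (by omega) hs
  · omega

lemma chain_step (hx : I.Feasible x) (hpg : I.PriorityGreedy prio x) (j : J) :
    I.completion x j ≤ I.r j + I.G.dist (I.o j) I.s ∨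
    (1 ≤ I.G.dist (I.o j) I.s ∧ ∃ k, prio k < prio j ∧
      I.completion x j ≤ I.completion x k + min (I.G.dist (I.o j) I.s) (I.dI + 2)) := by
  classical
  obtain ⟨hrel, hadj, hintf, hfin⟩ := hx
  obtain ⟨hinj, hsink, hmove, hblock⟩ := hpg
  by_cases hAe : ((Finset.range (I.completion x j)).filter
      (fun u => I.r j ≤ u ∧ x j (u + 1) = x j u)).Nonempty
  case neg =>
    left
    have hmoves : ∀ u, I.r j ≤ u → u < I.completion x j → x j (u + 1) ≠ x j u := by
      intro u h1 h2 hcontra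
      exact hAe ⟨u, Finset.mem_filter.mpr ⟨Finset.mem_range.mpr h2, h1, hcontra⟩⟩
    have := run_bound hmove hadj hfin j (I.r j) le_rfl hmoves
    rwa [hrel j (I.r j) le_rfl] at this
  case pos =>
    right
    obtain ⟨t, htmem, htmax⟩ : ∃ t ∈ (Finset.range (I.completion x j)).filter
        (fun u => I.r j ≤ u ∧ x j (u + 1) = x j u),
        ∀ u ∈ (Finset.range (I.completion x j)).filter
          (fun u => I.r j ≤ u ∧ x j (u + 1) = x j u), u ≤ t :=
      ⟨_, Finset.max'_mem _ hAe, fun u hu => Finset.le_max' _ u hu⟩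
    rw [Finset.mem_filter, Finset.mem_range] at htmem
    obtain ⟨htC, hrt, hstay⟩ := htmem
    have hmoves : ∀ u, t + 1 ≤ u → u < I.completion x j → x j (u + 1) ≠ x j u := by
      intro u h1 h2 hcontra
      have : u ≤ t :=
        htmax u (Finset.mem_filter.mpr ⟨Finset.mem_range.mpr h2, by
          constructor
          · omega
          · exact hcontra⟩)
      omega
    have hrun : I.completion x j ≤ (t + 1) + I.G.dist (x j (t + 1)) I.s :=
      run_bound hmove hadj hfin j (t + 1) (by omega) hmoves
    rw [hstay] at hrun
    have hjs : x j t ≠ I.s := by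
      intro h
      have := completion_le hrt h
      omega
    have hreach := reach hadj hfin j t
    obtain ⟨v, hadjv, hdv⟩ := exists_shortest_neighbor hjs hreach
    obtain ⟨k, hpk, hkmv, hintk⟩ := hblock j t ⟨hrt, hjs⟩ hstay v hadjv hdv
    obtain ⟨⟨hrk, hks⟩, hkdist⟩ := hmove k t hkmv
    have htCk : t < I.completion x k := by
      by_contra h
      push_neg at h
      exact hks (sink_stay hsink hrel hfin k t h)
    have hkreach := reach hadj hfin k t
    have hbd : I.G.dist (x j t) (x k t) ≤ I.dI + 1 := by
      rcases hintk with h | h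
      · have h1 : I.G.dist (x k t) v ≤ I.dI := dist_le_of_edist_le h
        have hrkv : I.G.Reachable (x k t) v := reachable_of_edist_le h
        have h2 : I.G.dist (x j t) v ≤ 1 := adj_dist_le_one hadjv
        have h3 := dist_tri hadjv.reachable hrkv.symm
        rw [dist_comm (u := v)] at h3
        omega
      · have h1 : I.G.dist (x j t) (x k (t + 1)) ≤ I.dI := dist_le_of_edist_le h
        have hadjk : I.G.Adj (x k t) (x k (t + 1)) := by
          rcases hadj k t with h' | h'
          · exact absurd h' hkmv
          · exact h'
        have h2 : I.G.dist (x k (t + 1)) (x k t) ≤ 1 := adj_dist_le_one hadjk.symm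
        have hr1 : I.G.Reachable (x j t) (x k (t + 1)) := reachable_of_edist_le h
        have h3 := dist_tri hr1 hadjk.symm.reachable
        omega
    have h5 := dist_tri (hreach.trans hkreach.symm) hkreach
    have hdk := deficit hadj hfin hrel k t (le_of_lt htCk)
    have h7 := dist_le_origin hmove hrel j t
    have h8 : 0 < I.G.dist (x j t) I.s := hreach.pos_dist_of_ne hjs
    exact ⟨by omega, k, hpk, by omega⟩

lemma chain_bound [Fintype J] (hx : I.Feasible x) (hpg : I.PriorityGreedy prio x) (j : J) :
    I.completion x j ≤ Finset.univ.sup (fun k => I.r k + I.G.dist (I.o k) I.s)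
      + ∑ k ∈ Finset.univ.filter (fun k => prio k ≤ prio j),
          min (I.G.dist (I.o k) I.s) (I.dI + 2) := by
  classical
  suffices H : ∀ n, ∀ j : J, prio j ≤ n →
      I.completion x j ≤ Finset.univ.sup (fun k => I.r k + I.G.dist (I.o k) I.s)
        + ∑ k ∈ Finset.univ.filter (fun k => prio k ≤ prio j),
            min (I.G.dist (I.o k) I.s) (I.dI + 2) from H (prio j) j le_rfl
  intro n
  induction n using Nat.strong_induction_on with
  | _ n ih =>
    intro j hj
    rcases chain_step hx hpg j with h | ⟨hD, k, hpk, hCk⟩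
    · refine le_trans h ?_
      have h1 : I.r j + I.G.dist (I.o j) I.s ≤
          Finset.univ.sup (fun k => I.r k + I.G.dist (I.o k) I.s) :=
        Finset.le_sup (f := fun k => I.r k + I.G.dist (I.o k) I.s) (Finset.mem_univ j)
      omega
    · rcases Nat.eq_zero_or_pos n with rfl | hn
      · omega
      · have hkb := ih (n - 1) (by omega) k (by omega)
        have hnot : j ∉ Finset.univ.filter (fun k' => prio k' ≤ prio k) := by
          rw [Finset.mem_filter]
          push_neg
          intro _
          omega
        have hsub : insert j (Finset.univ.filter (fun k' => prio k' ≤ prio k)) ⊆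
            Finset.univ.filter (fun k' => prio k' ≤ prio j) := by
          intro a ha
          rw [Finset.mem_insert] at ha
          rcases ha with rfl | ha
          · simp
          · rw [Finset.mem_filter] at ha ⊢
            exact ⟨ha.1, by omega⟩
        have heq := Finset.sum_insert
          (f := fun k' => min (I.G.dist (I.o k') I.s) (I.dI + 2)) hnot
        have hle := Finset.sum_le_sum_of_subset
          (f := fun k' => min (I.G.dist (I.o k') I.s) (I.dI + 2)) hsub
        beta_reduce at heq hle
        omega

end greedy

end WGPaux

namespace WGPaux

open WGPInstance SimpleGraph

variable {V J : Type*}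

lemma critical_lb {I : WGPInstance V J} [Fintype J] {y : J → ℕ → V} (hy : I.Feasible y) :
    ∑ k : J, min ((I.dI + 1) / 2) (I.G.dist (I.o k) I.s) ≤
      Finset.univ.sup (I.completion y) := by
  classical
  obtain ⟨hrel, hadj, hintf, hfin⟩ := hy
  set γ₀ := (I.dI + 1) / 2 with hγ₀
  -- the round chosen for the critical call of packet k into the sphere of radius δ
  let τ : (_ : J) × ℕ → ℕ := fun p => sInf {t | I.G.dist (y p.1 (t + 1)) I.s ≤ p.2}
  have hfact : ∀ k δ, δ < min γ₀ (I.G.dist (I.o k) I.s) →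
      I.G.dist (y k (τ ⟨k, δ⟩ + 1)) I.s ≤ δ ∧ δ < I.G.dist (y k (τ ⟨k, δ⟩)) I.s ∧
        τ ⟨k, δ⟩ < I.completion y k := by
    intro k δ hδ
    have hCk : I.r k + I.G.dist (I.o k) I.s ≤ I.completion y k :=
      release_add_dist_le hadj hfin hrel k
    have hmem : (I.completion y k - 1) ∈ {t | I.G.dist (y k (t + 1)) I.s ≤ δ} := by
      have h1 : (I.completion y k - 1) + 1 = I.completion y k := by omega
      rw [Set.mem_setOf_eq, h1, (completion_spec hrel hfin k).2]
      simp [SimpleGraph.dist_self]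
    have hτmem := Nat.sInf_mem ⟨_, hmem⟩
    have hτle : τ ⟨k, δ⟩ ≤ I.completion y k - 1 := Nat.sInf_le hmem
    refine ⟨hτmem, ?_, by omega⟩
    rcases Nat.eq_zero_or_pos (τ ⟨k, δ⟩) with h0 | h0
    · rw [h0, hrel k 0 (Nat.zero_le _)]
      omega
    · obtain ⟨u, hu⟩ := Nat.exists_eq_succ_of_ne_zero (by omega : τ ⟨k, δ⟩ ≠ 0)
      have hlt : u < τ ⟨k, δ⟩ := by omega
      have hu' : u ∉ {t | I.G.dist (y k (t + 1)) I.s ≤ δ} :=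
        Nat.notMem_of_lt_sInf hlt
      rw [Set.mem_setOf_eq] at hu'
      push_neg at hu'
      have h2 : u + 1 = τ ⟨k, δ⟩ := by omega
      rwa [h2] at hu'
  have hcard : (Finset.univ.sigma
      (fun k : J => Finset.range (min γ₀ (I.G.dist (I.o k) I.s)))).card =
      ∑ k : J, min γ₀ (I.G.dist (I.o k) I.s) := by
    rw [Finset.card_sigma]
    simp
  rw [← hcard]
  have h := Finset.card_le_card_of_injOn τ
    (s := Finset.univ.sigma (fun k : J => Finset.range (min γ₀ (I.G.dist (I.o k) I.s))))
    (t := Finset.range (Finset.univ.sup (I.completion y)))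
    (by
      rintro ⟨k, δ⟩ hp
      simp only [Finset.coe_sigma, Set.mem_sigma_iff, Finset.mem_coe, Finset.mem_sigma, Finset.mem_univ, Finset.mem_range, true_and] at hp
      have h1 := (hfact k δ hp).2.2
      have h2 : I.completion y k ≤ Finset.univ.sup (I.completion y) :=
        Finset.le_sup (Finset.mem_univ k)
      simp only [Finset.mem_coe, Finset.mem_range]
      omega)
    (by
      rintro ⟨k, δ⟩ hk ⟨k', δ'⟩ hk' heq
      simp only [Finset.coe_sigma, Set.mem_sigma_iff, Finset.mem_coe, Finset.mem_univ,
        Finset.mem_range, true_and] at hk hk'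
      obtain ⟨f1, f2, -⟩ := hfact k δ hk
      obtain ⟨g1, g2, -⟩ := hfact k' δ' hk'
      rw [heq] at f1 f2
      by_cases hkk : k = k'
      · subst hkk
        have hδδ : δ = δ' := by
          rcases lt_trichotomy δ δ' with h | h | h
          · have := dstep hadj hfin k (τ ⟨k, δ'⟩)
            omega
          · exact h
          · have := dstep hadj hfin k (τ ⟨k, δ'⟩)
            omega
        subst hδδ
        rfl
      · exfalso
        -- both packets make a call at round τ ⟨k', δ'⟩, and the calls interfere
        have hmvk : y k (τ ⟨k', δ'⟩ + 1) ≠ y k (τ ⟨k', δ'⟩) := by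
          intro h
          rw [h] at f1
          omega
        have hmvk' : y k' (τ ⟨k', δ'⟩ + 1) ≠ y k' (τ ⟨k', δ'⟩) := by
          intro h
          rw [h] at g1
          omega
        obtain ⟨-, hnI⟩ := hintf k k' (τ ⟨k', δ'⟩) hkk hmvk hmvk'
        apply hnI
        left
        -- edist (y k' t) (y k (t+1)) ≤ dI
        have hr1 : I.G.Reachable (y k' (τ ⟨k', δ'⟩)) I.s := reach hadj hfin k' _
        have hr2 : I.G.Reachable (y k (τ ⟨k', δ'⟩ + 1)) I.s := reach hadj hfin k _
        have ht1 : I.G.dist (y k' (τ ⟨k', δ'⟩)) I.s ≤ δ' + 1 := by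
          have := dstep hadj hfin k' (τ ⟨k', δ'⟩)
          omega
        have ht2 := dist_tri hr1 hr2.symm
        rw [dist_comm (u := I.s)] at ht2
        have hd : I.G.dist (y k' (τ ⟨k', δ'⟩)) (y k (τ ⟨k', δ'⟩ + 1)) ≤ I.dI := by omega
        exact edist_le_of_dist_le hd (hr1.trans hr2.symm))
  simpa using h

end WGPaux



open WGPInstance in
/-- FIFO is a `(1 + γ/γ₀)`-approximation for the minimization of the maximum completion
time in the Wireless Gathering Problem: for every WGP instance, every schedule `x`
produced by FIFO and every feasible schedule `y` (with completion times `C*`),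
`max_j C_j ≤ (1 + γ/γ₀) · max_j C*_j`, where `γ = d_I + 2` and `γ₀ = ⌊(d_I+1)/2⌋`. -/
theorem fifo_approx {V J : Type*} [Fintype J]
    (I : WGPInstance V J) (hdI : 1 ≤ I.dI)
    (x : J → ℕ → V) (hx : I.Feasible x) (hfifo : I.FIFO x)
    (y : J → ℕ → V) (hy : I.Feasible y) :
    ((Finset.univ.sup (I.completion x) : ℕ) : ℚ) ≤
      (1 + (I.dI + 2 : ℚ) / ((I.dI + 1) / 2 : ℕ)) *
        ((Finset.univ.sup (I.completion y) : ℕ) : ℚ) := by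

  classical
  obtain ⟨prio, -, hpg⟩ := hfifo
  obtain ⟨hyrel, hyadj, hyintf, hyfin⟩ := hy
  -- upper bound on FIFO makespan
  have hU : Finset.univ.sup (I.completion x) ≤
      Finset.univ.sup (fun k => I.r k + I.G.dist (I.o k) I.s)
        + ∑ k : J, min (I.G.dist (I.o k) I.s) (I.dI + 2) := by
    apply Finset.sup_le
    intro j _
    refine le_trans (WGPaux.chain_bound hx hpg j) ?_
    have h1 := Finset.sum_le_sum_of_subset
      (f := fun k => min (I.G.dist (I.o k) I.s) (I.dI + 2))
      (Finset.filter_subset (fun k => prio k ≤ prio j) Finset.univ)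
    beta_reduce at h1
    omega
  -- lower bounds on the optimum
  have hM : Finset.univ.sup (fun k => I.r k + I.G.dist (I.o k) I.s) ≤
      Finset.univ.sup (I.completion y) := by
    apply Finset.sup_le
    intro k _
    exact le_trans (WGPaux.release_add_dist_le hyadj hyfin hyrel k)
      (Finset.le_sup (Finset.mem_univ k))
  have hL : ∑ k : J, min ((I.dI + 1) / 2) (I.G.dist (I.o k) I.s) ≤
      Finset.univ.sup (I.completion y) :=
    WGPaux.critical_lb ⟨hyrel, hyadj, hyintf, hyfin⟩
  -- pointwise comparison of the two sums
  have hsum : (I.dI + 1) / 2 * ∑ k : J, min (I.G.dist (I.o k) I.s) (I.dI + 2) ≤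
      (I.dI + 2) * ∑ k : J, min ((I.dI + 1) / 2) (I.G.dist (I.o k) I.s) := by
    rw [Finset.mul_sum, Finset.mul_sum]
    apply Finset.sum_le_sum
    intro k _
    have hg : (I.dI + 1) / 2 ≤ I.dI + 2 := by omega
    rcases le_total ((I.dI + 1) / 2) (I.G.dist (I.o k) I.s) with h | h
    · rw [min_eq_left h]
      calc (I.dI + 1) / 2 * min (I.G.dist (I.o k) I.s) (I.dI + 2)
          ≤ (I.dI + 1) / 2 * (I.dI + 2) := Nat.mul_le_mul_left _ (min_le_right _ _)
        _ = (I.dI + 2) * ((I.dI + 1) / 2) := Nat.mul_comm _ _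
    · rw [min_eq_right h]
      have h2 : min (I.G.dist (I.o k) I.s) (I.dI + 2) = I.G.dist (I.o k) I.s := by omega
      rw [h2]
      exact Nat.mul_le_mul_right _ hg
  -- combine in ℕ
  have hkey : (I.dI + 1) / 2 * Finset.univ.sup (I.completion x) ≤
      ((I.dI + 1) / 2 + (I.dI + 2)) * Finset.univ.sup (I.completion y) := by
    calc (I.dI + 1) / 2 * Finset.univ.sup (I.completion x)
        ≤ (I.dI + 1) / 2 * (Finset.univ.sup (fun k => I.r k + I.G.dist (I.o k) I.s)
            + ∑ k : J, min (I.G.dist (I.o k) I.s) (I.dI + 2)) := Nat.mul_le_mul_left _ hU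
      _ = (I.dI + 1) / 2 * Finset.univ.sup (fun k => I.r k + I.G.dist (I.o k) I.s)
            + (I.dI + 1) / 2 * ∑ k : J, min (I.G.dist (I.o k) I.s) (I.dI + 2) :=
          Nat.mul_add _ _ _
      _ ≤ (I.dI + 1) / 2 * Finset.univ.sup (I.completion y)
            + (I.dI + 2) * ∑ k : J, min ((I.dI + 1) / 2) (I.G.dist (I.o k) I.s) :=
          Nat.add_le_add (Nat.mul_le_mul_left _ hM) hsum
      _ ≤ (I.dI + 1) / 2 * Finset.univ.sup (I.completion y)
            + (I.dI + 2) * Finset.univ.sup (I.completion y) :=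
          Nat.add_le_add_left (Nat.mul_le_mul_left _ hL) _
      _ = ((I.dI + 1) / 2 + (I.dI + 2)) * Finset.univ.sup (I.completion y) :=
          (Nat.add_mul _ _ _).symm
  -- pass to ℚ
  have hg1 : 1 ≤ (I.dI + 1) / 2 := by omega
  have hpos : (0 : ℚ) < (((I.dI + 1) / 2 : ℕ) : ℚ) := by exact_mod_cast hg1
  have hQ : (((I.dI + 1) / 2 : ℕ) : ℚ) * ((Finset.univ.sup (I.completion x) : ℕ) : ℚ) ≤
      ((((I.dI + 1) / 2 : ℕ) : ℚ) + ((I.dI : ℚ) + 2)) *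
        ((Finset.univ.sup (I.completion y) : ℕ) : ℚ) := by
    exact_mod_cast hkey
  rw [← mul_le_mul_iff_right₀ hpos]
  calc (((I.dI + 1) / 2 : ℕ) : ℚ) * ((Finset.univ.sup (I.completion x) : ℕ) : ℚ)
      ≤ ((((I.dI + 1) / 2 : ℕ) : ℚ) + ((I.dI : ℚ) + 2)) *
          ((Finset.univ.sup (I.completion y) : ℕ) : ℚ) := hQ
    _ = (((I.dI + 1) / 2 : ℕ) : ℚ) * ((1 + (I.dI + 2 : ℚ) / ((I.dI + 1) / 2 : ℕ)) *
          ((Finset.univ.sup (I.completion y) : ℕ) : ℚ)) := by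
        field_simp
end

section
/- FIFO is a 5-approximation algorithm for the minimization of the maximum completion time in the Wireless Gathering Problem, for every interference radius d_I ≥ 1; moreover, when d_I = 1, FIFO is a 4-approximation: the FIFO schedule satisfies max_j C_j ≤ 5 · max_j C*_j in general and max_j C_j ≤ 4 · max_j C*_j when d_I = 1, where C*_j are the completion times in any feasible schedule. -/
namespace WGPGather

open SimpleGraph WGPInstance

variable {V J : Type*}

section graphHelpers

variable {G : SimpleGraph V} {a b s u v : V}

lemma adj_dist_succ (hadj : G.Adj u v) (hv : G.Reachable v s) :
    G.dist u s ≤ G.dist v s + 1 := by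
  obtain ⟨w, hw⟩ := hv.exists_walk_length_eq_dist
  calc G.dist u s ≤ (SimpleGraph.Walk.cons hadj w).length := SimpleGraph.dist_le _
    _ = G.dist v s + 1 := by rw [SimpleGraph.Walk.length_cons, hw]

lemma dist_le_of_edist_le {d : ℕ} (h : G.edist a b ≤ (d : ℕ∞)) (hb : G.Reachable b s) :
    G.dist a s ≤ d + G.dist b s := by
  have hab : G.Reachable a b := by
    apply SimpleGraph.reachable_of_edist_ne_top
    intro htop
    rw [htop] at h
    simp at h
  have hdab : G.dist a b ≤ d := by
    have h2 := ENat.toNat_le_toNat h (by simp)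
    simpa [SimpleGraph.dist] using h2
  obtain ⟨w1, h1⟩ := hab.exists_walk_length_eq_dist
  obtain ⟨w2, h2⟩ := hb.exists_walk_length_eq_dist
  have h3 := SimpleGraph.dist_le (w1.append w2)
  rw [SimpleGraph.Walk.length_append, h1, h2] at h3
  omega

lemma edist_le_of_dist (ha : G.Reachable a s) (hb : G.Reachable b s) :
    G.edist a b ≤ ((G.dist a s + G.dist b s : ℕ) : ℕ∞) := by
  obtain ⟨w1, h1⟩ := ha.exists_walk_length_eq_dist
  obtain ⟨w2, h2⟩ := hb.exists_walk_length_eq_dist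
  have h3 := SimpleGraph.edist_le (w1.append w2.reverse)
  rwa [SimpleGraph.Walk.length_append, SimpleGraph.Walk.length_reverse, h1, h2] at h3

end graphHelpers

section sched

variable (I : WGPInstance V J) {y : J → ℕ → V}

lemma reach_step (hy : I.Feasible y) (p : J) (t : ℕ) :
    I.G.Reachable (y p t) (y p (t + 1)) := by
  rcases hy.2.1 p t with h | h
  · rw [h]
  · exact h.reachable

lemma reach_le (hy : I.Feasible y) (p : J) {a b : ℕ} (hab : a ≤ b) :
    I.G.Reachable (y p a) (y p b) := by
  obtain ⟨k, rfl⟩ := Nat.exists_eq_add_of_le hab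
  clear hab
  induction k with
  | zero => exact Reachable.refl _
  | succ n ih => exact ih.trans (reach_step I hy p (a + n))

lemma reach_sink (hy : I.Feasible y) (p : J) (t : ℕ) :
    I.G.Reachable (y p t) I.s := by
  obtain ⟨T, hT⟩ := hy.2.2.2 p
  rcases le_total t T with h | h
  · exact hT ▸ reach_le I hy p h
  · have h2 := reach_le I hy p h
    rw [hT] at h2
    exact h2.symm

lemma speed_one (hy : I.Feasible y) (p : J) (t : ℕ) :
    I.G.dist (y p t) I.s ≤ I.G.dist (y p (t + 1)) I.s + 1 := by
  rcases hy.2.1 p t with h | h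
  · rw [h]; omega
  · exact adj_dist_succ h (reach_sink I hy p (t + 1))

lemma speed (hy : I.Feasible y) (p : J) (a k : ℕ) :
    I.G.dist (y p a) I.s ≤ I.G.dist (y p (a + k)) I.s + k := by
  induction k with
  | zero => simp
  | succ n ih =>
      have h2 := speed_one I hy p (a + n)
      have h3 : a + (n + 1) = (a + n) + 1 := rfl
      rw [h3]
      omega

lemma completion_nonempty (hy : I.Feasible y) (p : J) :
    {t | I.r p ≤ t ∧ y p t = I.s}.Nonempty := by
  obtain ⟨T, hT⟩ := hy.2.2.2 p
  rcases le_or_gt (I.r p) T with h | h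
  · exact ⟨T, h, hT⟩
  · refine ⟨I.r p, le_rfl, ?_⟩
    have h1 := hy.1 p T h.le
    have h2 := hy.1 p (I.r p) le_rfl
    rw [h2, ← h1, hT]

lemma completion_mem (hy : I.Feasible y) (p : J) :
    I.r p ≤ I.completion y p ∧ y p (I.completion y p) = I.s :=
  Nat.sInf_mem (completion_nonempty I hy p)

lemma completion_le {p : J} {t : ℕ} (h1 : I.r p ≤ t) (h2 : y p t = I.s) :
    I.completion y p ≤ t :=
  Nat.sInf_le ⟨h1, h2⟩

lemma LB1 (hy : I.Feasible y) (p : J) :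
    I.r p + I.G.dist (I.o p) I.s ≤ I.completion y p := by
  obtain ⟨h1, h2⟩ := completion_mem I hy p
  have h3 := speed I hy p (I.r p) (I.completion y p - I.r p)
  rw [(by omega : I.r p + (I.completion y p - I.r p) = I.completion y p), h2,
    hy.1 p (I.r p) le_rfl] at h3
  simp only [SimpleGraph.dist_self, zero_add] at h3
  omega

lemma stay_sink (hss : ∀ p t, y p t = I.s → y p (t + 1) = I.s) (p : J) {a b : ℕ}
    (hab : a ≤ b) (h : y p a = I.s) : y p b = I.s := by
  obtain ⟨k, rfl⟩ := Nat.exists_eq_add_of_le hab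
  clear hab
  induction k with
  | zero => exact h
  | succ n ih => exact hss p (a + n) ih

lemma active_C (hy : I.Feasible y) (hss : ∀ p t, y p t = I.s → y p (t + 1) = I.s)
    (p : J) (t : ℕ) (hact : I.Active y p t) :
    t + I.G.dist (y p t) I.s ≤ I.completion y p := by
  obtain ⟨h1, h2⟩ := completion_mem I hy p
  have htC : t ≤ I.completion y p := by
    by_contra hlt
    push_neg at hlt
    exact hact.2 (stay_sink I hss p hlt.le h2)
  have h3 := speed I hy p t (I.completion y p - t)
  rw [(by omega : t + (I.completion y p - t) = I.completion y p), h2] at h3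
  simp only [SimpleGraph.dist_self, zero_add] at h3
  omega

end sched

/-- weight of a packet: its lower-bound contribution to any feasible schedule. -/
noncomputable def wt (I : WGPInstance V J) (k : J) : ℕ :=
  min (I.G.dist (I.o k) I.s) ((I.dI + 1) / 2)

section lowerbound

variable (I : WGPInstance V J) {y : J → ℕ → V}

/-- serialization lower bound: receptions close to the sink happen one at a time. -/
lemma LB2 [Fintype J] (hy : I.Feasible y) (hdI : 1 ≤ I.dI) :
    ∑ k : J, wt I k ≤ Finset.univ.sup (I.completion y) := by
  classical
  set L := Finset.univ.sup (I.completion y) with hL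
  set Q := (I.dI + 1) / 2 with hQ
  set e : J → ℕ → ℕ := fun p ℓ => sInf {t | I.G.dist (y p t) I.s ≤ ℓ} with he
  have hkey : ∀ p ℓ, ℓ < wt I p →
      1 ≤ e p ℓ ∧ e p ℓ ≤ L ∧ I.G.dist (y p (e p ℓ)) I.s = ℓ ∧
        I.G.dist (y p (e p ℓ - 1)) I.s = ℓ + 1 ∧ y p (e p ℓ) ≠ y p (e p ℓ - 1) := by
    intro p ℓ hℓ
    have hwt1 : wt I p ≤ I.G.dist (I.o p) I.s := min_le_left _ _
    have hwt2 : wt I p ≤ Q := min_le_right _ _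
    have hCmem : I.completion y p ∈ {t | I.G.dist (y p t) I.s ≤ ℓ} := by
      show I.G.dist (y p (I.completion y p)) I.s ≤ ℓ
      rw [(completion_mem I hy p).2]
      simp [SimpleGraph.dist_self]
    have hne : {t | I.G.dist (y p t) I.s ≤ ℓ}.Nonempty := ⟨_, hCmem⟩
    have hmem : I.G.dist (y p (e p ℓ)) I.s ≤ ℓ := Nat.sInf_mem hne
    have heC : e p ℓ ≤ I.completion y p := Nat.sInf_le hCmem
    have heL : e p ℓ ≤ L :=
      le_trans heC (Finset.le_sup (f := I.completion y) (Finset.mem_univ p))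
    have h0 : ¬ I.G.dist (y p 0) I.s ≤ ℓ := by
      rw [hy.1 p 0 (Nat.zero_le _)]
      omega
    have he1 : 1 ≤ e p ℓ := by
      rcases Nat.eq_zero_or_pos (e p ℓ) with h | h
      · exact absurd (h ▸ hmem) h0
      · exact h
    have hpred : ¬ I.G.dist (y p (e p ℓ - 1)) I.s ≤ ℓ := by
      intro hmem2
      have h5 : e p ℓ ≤ e p ℓ - 1 :=
        Nat.sInf_le (s := {t | I.G.dist (y p t) I.s ≤ ℓ}) hmem2
      omega
    have hsp := speed_one I hy p (e p ℓ - 1)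
    rw [(by omega : e p ℓ - 1 + 1 = e p ℓ)] at hsp
    have hmv : y p (e p ℓ) ≠ y p (e p ℓ - 1) := by
      intro hqe
      rw [hqe] at hmem
      exact hpred hmem
    exact ⟨he1, heL, by omega, by omega, hmv⟩
  have hcard : ∑ k : J, wt I k =
      ((Finset.univ : Finset J).sigma fun p => Finset.range (wt I p)).card := by
    rw [Finset.card_sigma]
    simp
  rw [hcard]
  have hmaps : ∀ q ∈ (Finset.univ : Finset J).sigma fun p => Finset.range (wt I p),
      e q.1 q.2 ∈ Finset.Icc 1 L := by
    rintro ⟨p, ℓ⟩ hq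
    rw [Finset.mem_sigma, Finset.mem_range] at hq
    obtain ⟨h1, h2, _⟩ := hkey p ℓ hq.2
    rw [Finset.mem_Icc]
    exact ⟨h1, h2⟩
  have hinj : Set.InjOn (fun q : Σ _ : J, ℕ => e q.1 q.2)
      ((Finset.univ : Finset J).sigma fun p => Finset.range (wt I p)) := by
    rintro ⟨p, ℓ⟩ hp ⟨q, ℓ'⟩ hq heq
    simp only [Finset.coe_sigma, Set.mem_sigma_iff, Finset.mem_coe, Finset.mem_range,
      Finset.mem_univ, true_and] at hp hq
    simp only at heq
    obtain ⟨hp1, hpL, hpd, hpd', hpm⟩ := hkey p ℓ hp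
    obtain ⟨hq1, hqL, hqd, hqd', hqm⟩ := hkey q ℓ' hq
    by_cases hpq : p = q
    · subst hpq
      rw [heq, hqd] at hpd
      simp [hpd]
    · exfalso
      set t := e p ℓ with hte
      have hteq : e q ℓ' = t := heq.symm
      rw [hteq] at hq1 hqd hqd' hqm
      have htm : t - 1 + 1 = t := by omega
      have m1 : y p (t - 1 + 1) ≠ y p (t - 1) := by rw [htm]; exact hpm
      have m2 : y q (t - 1 + 1) ≠ y q (t - 1) := by rw [htm]; exact hqm
      obtain ⟨-, hni⟩ := hy.2.2.1 p q (t - 1) hpq m1 m2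
      apply hni
      right
      have hra := reach_sink I hy p (t - 1)
      have hrb := reach_sink I hy q (t - 1 + 1)
      have hcast := edist_le_of_dist hra hrb
      rw [htm, hpd', hqd] at hcast
      rw [htm]
      refine le_trans hcast ?_
      have hQp : ℓ < Q := lt_of_lt_of_le hp (min_le_right _ _)
      have hQq : ℓ' < Q := lt_of_lt_of_le hq (min_le_right _ _)
      have : ℓ + 1 + ℓ' ≤ I.dI := by omega
      exact_mod_cast Nat.cast_le.mpr this
  calc ((Finset.univ : Finset J).sigma fun p => Finset.range (wt I p)).card
      ≤ (Finset.Icc 1 L).card := Finset.card_le_card_of_injOn _ hmaps hinj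
    _ = L := by rw [Nat.card_Icc]; omega

end lowerbound

section greedy

variable (I : WGPInstance V J) {x : J → ℕ → V} {prio : J → ℕ}

lemma exists_step {G : SimpleGraph V} {u s : V} (h : G.Reachable u s)
    (hpos : 0 < G.dist u s) : ∃ v, G.Adj u v ∧ G.dist v s + 1 = G.dist u s := by
  obtain ⟨w, hw⟩ := h.exists_walk_length_eq_dist
  cases w with
  | nil =>
      rw [SimpleGraph.Walk.length_nil] at hw
      omega
  | cons hadj q =>
      rw [SimpleGraph.Walk.length_cons] at hw
      refine ⟨_, hadj, ?_⟩
      have hqv : G.dist _ s ≤ q.length := SimpleGraph.dist_le q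
      have hvle : G.dist u s ≤ G.dist _ s + 1 := adj_dist_succ hadj ⟨q⟩
      omega

lemma level_anti (hpg : I.PriorityGreedy prio x) (p : J) {a b : ℕ} (hab : a ≤ b) :
    I.G.dist (x p b) I.s ≤ I.G.dist (x p a) I.s := by
  obtain ⟨k, rfl⟩ := Nat.exists_eq_add_of_le hab
  clear hab
  induction k with
  | zero => exact le_rfl
  | succ n ih =>
      by_cases h : x p (a + n + 1) = x p (a + n)
      · have h2 : a + (n + 1) = (a + n) + 1 := rfl
        rw [h2, h]
        exact ih
      · have h3 := (hpg.2.2.1 p (a + n) h).2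
        have h2 : a + (n + 1) = (a + n) + 1 := rfl
        rw [h2]
        omega

lemma free_run (hx : I.Feasible x) (hpg : I.PriorityGreedy prio x) :
    ∀ (n : ℕ) (p : J) (T : ℕ), I.r p ≤ T → I.G.dist (x p T) I.s ≤ n →
      (∀ t, T ≤ t → I.Active x p t → x p (t + 1) ≠ x p t) →
      I.completion x p ≤ T + n := by
  intro n
  induction n with
  | zero =>
      intro p T hrT hd hmv
      have hreach := reach_sink I hx p T
      have hTs : x p T = I.s := by
        have h0 : I.G.dist (x p T) I.s = 0 := Nat.le_zero.mp hd
        rcases SimpleGraph.dist_eq_zero_iff_eq_or_not_reachable.mp h0 with h | h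
        · exact h
        · exact absurd hreach h
      simpa using completion_le I hrT hTs
  | succ n ih =>
      intro p T hrT hd hmv
      by_cases hs : x p T = I.s
      · have := completion_le I hrT hs
        omega
      · have hact : I.Active x p T := ⟨hrT, hs⟩
        have hmove := hmv T le_rfl hact
        have hstep := (hpg.2.2.1 p T hmove).2
        have hd2 : I.G.dist (x p (T + 1)) I.s ≤ n := by omega
        have h4 := ih p (T + 1) (by omega) hd2 (fun t ht => hmv t (by omega))
        omega

lemma blocker (hx : I.Feasible x) (hpg : I.PriorityGreedy prio x)
    {p : J} {t : ℕ} (hact : I.Active x p t) (hstay : x p (t + 1) = x p t) :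
    ∃ k, prio k < prio p ∧
      t + I.G.dist (x k t) I.s ≤ I.completion x k ∧
      1 ≤ I.G.dist (x k t) I.s ∧
      I.G.dist (x p t) I.s ≤ I.G.dist (x k t) I.s + I.dI + 1 := by
  have hreach := reach_sink I hx p t
  have hLpos : 0 < I.G.dist (x p t) I.s := hreach.pos_dist_of_ne hact.2
  obtain ⟨v, hadj, hveq⟩ := exists_step hreach hLpos
  obtain ⟨k, hk1, hk2, hk3⟩ := hpg.2.2.2 p t hact hstay v hadj hveq
  have hkstep := hpg.2.2.1 k t hk2
  have hkreach := reach_sink I hx k t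
  have hkpos : 1 ≤ I.G.dist (x k t) I.s := hkreach.pos_dist_of_ne hkstep.1.2
  have hwindow : I.G.dist (x p t) I.s ≤ I.G.dist (x k t) I.s + I.dI + 1 := by
    rcases hk3 with h | h
    · rw [SimpleGraph.edist_comm] at h
      have h2 := dist_le_of_edist_le h hkreach
      omega
    · have hreach1 := reach_sink I hx k (t + 1)
      have h2 := dist_le_of_edist_le h hreach1
      have h3 := hkstep.2
      omega
  have hCk := active_C I hx hpg.2.1 k t hkstep.1
  exact ⟨k, hk1, hCk, hkpos, hwindow⟩

lemma main_bound [Fintype J] (hx : I.Feasible x) (hpg : I.PriorityGreedy prio x)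
    {y : J → ℕ → V} (hy : I.Feasible y) (c : ℕ)
    (hc : ∀ a b : ℕ, 1 ≤ a → a ≤ b → min (I.dI + 2) a ≤ c * min b ((I.dI + 1) / 2)) :
    ∀ (n : ℕ) (p : J), prio p < n →
      I.completion x p ≤ Finset.univ.sup (I.completion y)
        + c * ∑ k ∈ Finset.univ.filter (fun k => prio k ≤ prio p), wt I k := by
  classical
  intro n
  induction n with
  | zero => exact fun p h => absurd h (Nat.not_lt_zero _)
  | succ n ih =>
      intro p hp
      rcases Nat.lt_succ_iff_lt_or_eq.mp hp with h | h
      · exact ih p h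
      set B := {t | I.r p ≤ t ∧ x p (t + 1) = x p t ∧ x p t ≠ I.s} with hBdef
      by_cases hB : B.Nonempty
      · -- p gets blocked at some point; consider the last time.
        have hbdd : BddAbove B := by
          refine ⟨I.completion x p, fun t ht => ?_⟩
          by_contra hlt
          push_neg at hlt
          exact ht.2.2 (stay_sink I hpg.2.1 p hlt.le (completion_mem I hx p).2)
        have ht1 := Nat.sSup_mem hB hbdd
        set t1 := sSup B with ht1def
        obtain ⟨hrt1, hstay, hnes⟩ := ht1
        have hact : I.Active x p t1 := ⟨hrt1, hnes⟩
        obtain ⟨k, hkp, hCk, hkpos, hwin⟩ := blocker I hx hpg hact hstay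
        have hfr := free_run I hx hpg (I.G.dist (x p t1) I.s) p (t1 + 1) (by omega)
          (le_of_eq (by rw [hstay])) ?_
        · set a := I.G.dist (x p t1) I.s with ha
          have hapos : 1 ≤ a := (reach_sink I hx p t1).pos_dist_of_ne hnes
          have hdel : a ≤ I.G.dist (I.o p) I.s := by
            have h2 := level_anti I hpg p hrt1
            rwa [hx.1 p (I.r p) le_rfl] at h2
          have h1 : I.completion x p ≤ I.completion x k + min (I.dI + 2) a := by
            omega
          have hIH := ih k (by omega)
          have hch : min (I.dI + 2) a ≤ c * wt I p := by
            simp only [wt]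
            exact hc a _ hapos hdel
          have hsum : (∑ k' ∈ Finset.univ.filter (fun k' => prio k' ≤ prio k), wt I k')
              + wt I p ≤ ∑ k' ∈ Finset.univ.filter (fun k' => prio k' ≤ prio p), wt I k' := by
            have hnot : p ∉ Finset.univ.filter (fun k' => prio k' ≤ prio k) := by
              simp only [Finset.mem_filter, Finset.mem_univ, true_and]
              omega
            have hsub : insert p (Finset.univ.filter (fun k' => prio k' ≤ prio k))
                ⊆ Finset.univ.filter (fun k' => prio k' ≤ prio p) := by
              intro z hz
              simp only [Finset.mem_insert, Finset.mem_filter, Finset.mem_univ, true_and] at *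
              rcases hz with rfl | hz
              · exact le_rfl
              · omega
            calc (∑ k' ∈ Finset.univ.filter (fun k' => prio k' ≤ prio k), wt I k') + wt I p
                = ∑ z ∈ insert p (Finset.univ.filter (fun k' => prio k' ≤ prio k)), wt I z := by
                  rw [Finset.sum_insert hnot]; ring
              _ ≤ _ := Finset.sum_le_sum_of_subset hsub
          have hmul := Nat.mul_le_mul_left c hsum
          calc I.completion x p ≤ I.completion x k + min (I.dI + 2) a := h1
            _ ≤ (Finset.univ.sup (I.completion y)
                  + c * ∑ k' ∈ Finset.univ.filter (fun k' => prio k' ≤ prio k), wt I k')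
                + c * wt I p := Nat.add_le_add hIH hch
            _ = Finset.univ.sup (I.completion y)
                + c * ((∑ k' ∈ Finset.univ.filter (fun k' => prio k' ≤ prio k), wt I k')
                  + wt I p) := by ring
            _ ≤ _ := by omega
        · intro t ht hactt hmm
          have htB : t ∈ B := ⟨hactt.1, hmm, hactt.2⟩
          have := le_csSup hbdd htB
          omega
      · -- p is never blocked: it runs freely from its release.
        have hmv : ∀ t, I.r p ≤ t → I.Active x p t → x p (t + 1) ≠ x p t := by
          intro t ht hactt hmm
          exact hB ⟨t, hactt.1, hmm, hactt.2⟩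
        have hfr := free_run I hx hpg (I.G.dist (x p (I.r p)) I.s) p (I.r p) le_rfl le_rfl hmv
        rw [hx.1 p (I.r p) le_rfl] at hfr
        have hlb := LB1 I hy p
        have hle := Finset.le_sup (f := I.completion y) (Finset.mem_univ p)
        omega

end greedy

end WGPGather

open WGPInstance in
/-- FIFO is a 5-approximation for the minimization of the maximum completion time in the
Wireless Gathering Problem for every interference radius `d_I ≥ 1`; moreover, when
`d_I = 1`, FIFO is a 4-approximation.  Here `x` is any schedule produced by FIFO and `y`
is any feasible schedule (with completion times `C*`). -/
theorem fifo_five_approx {V J : Type*} [Fintype J]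
    (I : WGPInstance V J) (hdI : 1 ≤ I.dI)
    (x : J → ℕ → V) (hx : I.Feasible x) (hfifo : I.FIFO x)
    (y : J → ℕ → V) (hy : I.Feasible y) :
    Finset.univ.sup (I.completion x) ≤ 5 * Finset.univ.sup (I.completion y) ∧
    (I.dI = 1 →
      Finset.univ.sup (I.completion x) ≤ 4 * Finset.univ.sup (I.completion y)) := by
  classical
  obtain ⟨prio, -, hpg⟩ := hfifo
  have hA := WGPGather.LB2 I hy hdI
  have key : ∀ c : ℕ,
      (∀ a b : ℕ, 1 ≤ a → a ≤ b → min (I.dI + 2) a ≤ c * min b ((I.dI + 1) / 2)) →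
      Finset.univ.sup (I.completion x) ≤ (c + 1) * Finset.univ.sup (I.completion y) := by
    intro c hc
    apply Finset.sup_le
    intro p _
    have hmain := WGPGather.main_bound I hx hpg hy c hc (prio p + 1) p (by omega)
    have hsub : (∑ k ∈ Finset.univ.filter (fun k => prio k ≤ prio p), WGPGather.wt I k)
        ≤ ∑ k : J, WGPGather.wt I k :=
      Finset.sum_le_sum_of_subset (Finset.filter_subset _ _)
    have hmul : c * (∑ k ∈ Finset.univ.filter (fun k => prio k ≤ prio p), WGPGather.wt I k)
        ≤ c * Finset.univ.sup (I.completion y) :=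
      Nat.mul_le_mul_left c (le_trans hsub hA)
    have hexp : (c + 1) * Finset.univ.sup (I.completion y)
        = c * Finset.univ.sup (I.completion y) + Finset.univ.sup (I.completion y) := by ring
    omega
  constructor
  · have h4 := key 4 (by intro a b h1 h2; omega)
    have : (4 + 1) * Finset.univ.sup (I.completion y)
        = 5 * Finset.univ.sup (I.completion y) := by ring
    omega
  · intro h1
    have h3 := key 3 (by intro a b ha hb; omega)
    have : (3 + 1) * Finset.univ.sup (I.completion y)
        = 4 * Finset.univ.sup (I.completion y) := by ring
    omega
end

section
/- Let A be an algorithm that maps every WGP instance to a feasible σ-speed schedule and has the online prefix property: for every instance and every time t, the schedule A produces restricted to the packets with release date at most t coincides with the schedule A produces on the sub-instance consisting only of those packets (so the completion time of each packet is determined at its release date and is unaffected by packets released later). If for every instance the maximum completion time of A's schedule is at most the optimal unit-speed maximum completion time (A is σ-speed optimal for C-WGP), then for every instance the maximum flow time of A's schedule is at most the optimal unit-speed maximum flow time (A is σ-speed optimal for F-WGP). -/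
namespace WGPInstance

variable {V J : Type*}

/-- A feasible `σ`-speed schedule: rounds of the schedule have length `1/σ` time units,
so round `t` of the schedule starts at real time `t/σ`; packet `j` may only be moved in
rounds `t` with `σ·r_j ≤ t`.  All other feasibility conditions are as in the unit-speed
case. -/
def FeasibleSpeed (I : WGPInstance V J) (σ : ℝ) (x : J → ℕ → V) : Prop :=
  (∀ j (t : ℕ), (t : ℝ) ≤ σ * I.r j → x j t = I.o j) ∧
  (∀ j t, x j (t + 1) = x j t ∨ I.G.Adj (x j t) (x j (t + 1))) ∧
  (∀ j k t, j ≠ k → x j (t + 1) ≠ x j t → x k (t + 1) ≠ x k t →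
    x j t ≠ x k t ∧ ¬ I.Interferes (x j t) (x j (t + 1)) (x k t) (x k (t + 1))) ∧
  (∀ j, ∃ t, x j t = I.s)

/-- The completion round (in `σ`-speed rounds, i.e. in time units of `1/σ`) of packet `j`:
the first round `t ≥ σ·r_j` with `x j t = s`.  The completion time of `j` in original
time units is `I.gridCompletion σ x j / σ`. -/
noncomputable def gridCompletion (I : WGPInstance V J) (σ : ℝ) (x : J → ℕ → V) (j : J) : ℕ :=
  sInf {t : ℕ | σ * I.r j ≤ (t : ℝ) ∧ x j t = I.s}

/-- Packet `j` is available at `σ`-speed round `t` if it has been released and has not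
yet reached the sink. -/
def SpeedActive (I : WGPInstance V J) (σ : ℝ) (x : J → ℕ → V) (j : J) (t : ℕ) : Prop :=
  σ * I.r j ≤ (t : ℝ) ∧ x j t ≠ I.s

/-- The `σ`-speed analogue of `PriorityGreedy`. -/
def PriorityGreedySpeed (I : WGPInstance V J) (σ : ℝ) (prio : J → ℕ) (x : J → ℕ → V) :
    Prop :=
  Function.Injective prio ∧
  (∀ j t, x j t = I.s → x j (t + 1) = I.s) ∧
  (∀ j t, x j (t + 1) ≠ x j t →
    I.SpeedActive σ x j t ∧ I.G.dist (x j (t + 1)) I.s + 1 = I.G.dist (x j t) I.s) ∧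
  (∀ j t, I.SpeedActive σ x j t → x j (t + 1) = x j t →
    ∀ v, I.G.Adj (x j t) v → I.G.dist v I.s + 1 = I.G.dist (x j t) I.s →
      ∃ k, prio k < prio j ∧ x k (t + 1) ≠ x k t ∧
        I.Interferes (x j t) v (x k t) (x k (t + 1)))

/-- `x` is a schedule that `σ`-FIFO may produce: it is a FIFO (earlier release date =
higher priority) greedy schedule on the `σ`-speed time grid, where release dates have
been scaled to `σ·r_j` (i.e. they stay at real time `r_j`). -/
def FIFOSpeed (I : WGPInstance V J) (σ : ℝ) (x : J → ℕ → V) : Prop :=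
  ∃ prio : J → ℕ, (∀ j k, I.r j < I.r k → prio j < prio k) ∧
    I.PriorityGreedySpeed σ prio x

end WGPInstance

open WGPInstance in
/-- Let `A` be an algorithm mapping every WGP instance (on a fixed graph `G` with sink
`s` and interference radius `d_I`, with an arbitrary finite packet set `J`, origins `o`
and release dates `r`) to a feasible `σ`-speed schedule, and suppose `A` has the online
prefix property: for every instance and every time `t`, the schedule of `A` restricted
to the packets released by time `t` coincides with the schedule `A` produces on the
sub-instance consisting only of those packets.  If `A` is `σ`-speed optimal for C-WGP
(its maximum completion time, in original time units, is at most that of every feasible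
unit-speed schedule), then `A` is `σ`-speed optimal for F-WGP (its maximum flow time is
at most that of every feasible unit-speed schedule). -/
theorem speed_optimal_completion_to_flow {V : Type*}
    (G : SimpleGraph V) (s : V) (dI : ℕ) (hdI : 1 ≤ dI) (σ : ℝ) (hσ : 1 ≤ σ)
    (A : ∀ (J : Type) [Fintype J], (J → V) → (J → ℕ) → J → ℕ → V)
    (hfeas : ∀ (J : Type) [Fintype J] (o : J → V) (r : J → ℕ),
      (WGPInstance.mk G s dI o r).FeasibleSpeed σ (A J o r))
    (hprefix : ∀ (J : Type) [Fintype J] (o : J → V) (r : J → ℕ) (t : ℕ) (j : J)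
      (hj : r j ≤ t),
      A J o r j =
        A {j' : J // r j' ≤ t} (fun j' => o j'.1) (fun j' => r j'.1) ⟨j, hj⟩)
    (hopt : ∀ (J : Type) [Fintype J] (o : J → V) (r : J → ℕ) (y : J → ℕ → V),
      (WGPInstance.mk G s dI o r).Feasible y →
      ((Finset.univ.sup
          ((WGPInstance.mk G s dI o r).gridCompletion σ (A J o r)) : ℕ) : ℝ) / σ ≤
        ((Finset.univ.sup ((WGPInstance.mk G s dI o r).completion y) : ℕ) : ℝ)) :
    ∀ (J : Type) [Fintype J] (o : J → V) (r : J → ℕ) (y : J → ℕ → V),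
      (WGPInstance.mk G s dI o r).Feasible y →
      (⨆ j, ((((WGPInstance.mk G s dI o r).gridCompletion σ (A J o r) j : ℕ) : ℝ) / σ
          - (r j : ℝ))) ≤
        ⨆ j, ((((WGPInstance.mk G s dI o r).completion y j : ℕ) : ℝ) - (r j : ℝ)) := by
  intro J _ o r y hy
  rcases isEmpty_or_nonempty J with hJ | hJ
  · rw [Real.iSup_of_isEmpty, Real.iSup_of_isEmpty]
  have hσ0 : (0 : ℝ) < σ := lt_of_lt_of_le one_pos hσ
  set I := WGPInstance.mk G s dI o r with hI
  -- The completion set of every packet under y is nonempty and contains only times ≥ r k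
  have hcompl : ∀ k : J, {t | r k ≤ t ∧ y k t = s}.Nonempty := by
    intro k
    obtain ⟨t0, ht0⟩ := hy.2.2.2 k
    by_cases h : r k ≤ t0
    · exact ⟨t0, h, ht0⟩
    · push_neg at h
      have ho : y k t0 = o k := hy.1 k t0 (le_of_lt h)
      exact ⟨r k, le_rfl, by rw [hy.1 k (r k) le_rfl]; exact ho.symm.trans ht0⟩
  have hrc : ∀ k : J, r k ≤ I.completion y k := fun k => (Nat.sInf_mem (hcompl k)).1
  -- bounded above range of flows
  have hbdd : BddAbove (Set.range fun k : J => ((I.completion y k : ℕ) : ℝ) - (r k : ℝ)) :=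
    (Set.finite_range _).bddAbove
  apply ciSup_le
  intro j
  -- the sub-instance of packets released by time r j
  set J' := {j' : J // r j' ≤ r j} with hJ'
  have hne' : Nonempty J' := ⟨⟨j, le_rfl⟩⟩
  set o' : J' → V := fun k => o k.1 with ho'
  set r' : J' → ℕ := fun k => r k.1 with hr'
  set I' := WGPInstance.mk G s dI o' r' with hI'
  set y' : J' → ℕ → V := fun k t => y k.1 t with hy'
  have hfeas' : I'.Feasible y' := by
    refine ⟨fun k t h => hy.1 k.1 t h, fun k t => hy.2.1 k.1 t, ?_, fun k => hy.2.2.2 k.1⟩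
    intro k l t hne h1 h2
    exact hy.2.2.1 k.1 l.1 t (fun h => hne (Subtype.ext h)) h1 h2
  have hopt' := hopt J' o' r' y' hfeas'
  -- A's completion of j on the full instance equals its completion on the sub-instance
  have hAeq : A J o r j = A J' o' r' ⟨j, le_rfl⟩ := hprefix J o r (r j) j le_rfl
  have hgc : I.gridCompletion σ (A J o r) j
      = I'.gridCompletion σ (A J' o' r') ⟨j, le_rfl⟩ := by
    unfold WGPInstance.gridCompletion
    simp only [hAeq]
    rfl
  -- bound the grid completion of j by the sup over the sub-instance
  have h1 : ((I.gridCompletion σ (A J o r) j : ℕ) : ℝ) / σ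
      ≤ ((Finset.univ.sup (I'.gridCompletion σ (A J' o' r')) : ℕ) : ℝ) / σ := by
    gcongr
    rw [hgc]
    exact Finset.le_sup (Finset.mem_univ _)
  -- the sup of completions on the sub-instance is bounded by r j + max flow
  obtain ⟨k', -, hk'⟩ := Finset.exists_mem_eq_sup Finset.univ ⟨⟨j, le_rfl⟩, Finset.mem_univ _⟩
    (I'.completion y')
  have hceq : I'.completion y' k' = I.completion y k'.1 := rfl
  have hflow : ((I.completion y k'.1 : ℕ) : ℝ) - (r k'.1 : ℝ)
      ≤ ⨆ k, ((I.completion y k : ℕ) : ℝ) - (r k : ℝ) := le_ciSup hbdd k'.1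
  have h2 : ((Finset.univ.sup (I'.completion y') : ℕ) : ℝ)
      ≤ (r j : ℝ) + ⨆ k, ((I.completion y k : ℕ) : ℝ) - (r k : ℝ) := by
    rw [hk', hceq]
    have hrk : (r k'.1 : ℝ) ≤ (r j : ℝ) := Nat.cast_le.mpr k'.2
    nlinarith [hflow]
  have := le_trans (le_trans h1 hopt') h2
  linarith
end

section
/- For every interference radius d_I ≥ 1, the algorithm 5-FIFO is a 5-speed optimal algorithm for both C-WGP and F-WGP: on every WGP instance, the maximum completion time and the maximum flow time of the 5-speed schedule produced by 5-FIFO are at most the optimal maximum completion time and the optimal maximum flow time, respectively, over all feasible unit-speed schedules. -/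
section AuxGraph


open SimpleGraph

variable {V : Type*} {G : SimpleGraph V} {u v w s : V}

lemma dist_tri (h1 : G.Reachable u v) (h2 : G.Reachable v w) :
    G.dist u w ≤ G.dist u v + G.dist v w := by
  obtain ⟨p, hp⟩ := h1.exists_walk_length_eq_dist
  obtain ⟨q, hq⟩ := h2.exists_walk_length_eq_dist
  simpa [Walk.length_append, hp, hq] using SimpleGraph.dist_le (p.append q)

lemma exists_improving (hr : G.Reachable u s) (hne : u ≠ s) :
    ∃ v, G.Adj u v ∧ G.dist v s + 1 = G.dist u s := by
  obtain ⟨p, hp⟩ := hr.exists_walk_length_eq_dist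
  cases p with
  | nil => exact absurd rfl hne
  | cons h q =>
      refine ⟨_, h, ?_⟩
      have h1 : G.dist _ s ≤ q.length := SimpleGraph.dist_le q
      have h2 : G.dist u s ≤ G.dist u _ + G.dist _ s :=
        dist_tri ⟨h.toWalk⟩ ⟨q⟩
      have h3 := SimpleGraph.dist_le h.toWalk
      simp [SimpleGraph.Adj.toWalk] at h3
      simp only [Walk.length_cons] at hp
      omega

lemma edist_coe_dist (h : G.Reachable u v) : G.edist u v = (G.dist u v : ℕ∞) := by
  rw [SimpleGraph.dist]
  exact (ENat.coe_toNat (by rwa [edist_ne_top_iff_reachable])).symm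

lemma dist_le_of_edist_le {n : ℕ} (h : G.edist u v ≤ n) : G.dist u v ≤ n := by
  have hr : G.Reachable u v := by
    rw [← edist_ne_top_iff_reachable]
    exact fun ht => by simp [ht] at h
  rw [edist_coe_dist hr] at h
  exact_mod_cast h

lemma edist_le_of_dist_le {n : ℕ} (hr : G.Reachable u v) (h : G.dist u v ≤ n) :
    G.edist u v ≤ n := by
  rw [edist_coe_dist hr]
  exact_mod_cast h

lemma adj_dist_le_one (h : G.Adj u v) : G.dist u v ≤ 1 := by
  simpa using SimpleGraph.dist_le h.toWalk

section Traj
variable {z : ℕ → V}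

lemma traj_reach (hstep : ∀ t, z (t+1) = z t ∨ G.Adj (z t) (z (t+1))) :
    ∀ t t', G.Reachable (z t) (z t') := by
  have h1 : ∀ t, G.Reachable (z t) (z (t+1)) := by
    intro t
    rcases hstep t with h | h
    · rw [h]
    · exact ⟨h.toWalk⟩
  have h2 : ∀ n t, G.Reachable (z t) (z (t+n)) := by
    intro n
    induction n with
    | zero => intro t; exact SimpleGraph.Reachable.refl _
    | succ n ih => intro t; exact ((ih t).trans (by rw [← Nat.add_assoc]; exact h1 (t+n)))
  intro t t'
  rcases le_total t t' with h | h
  · obtain ⟨n, rfl⟩ := Nat.exists_eq_add_of_le h; exact h2 n t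
  · obtain ⟨n, rfl⟩ := Nat.exists_eq_add_of_le h; exact (h2 n t').symm

lemma traj_reach_s (hstep : ∀ t, z (t+1) = z t ∨ G.Adj (z t) (z (t+1)))
    (hT : ∃ T, z T = s) : ∀ t, G.Reachable (z t) s := by
  intro t
  obtain ⟨T, hTs⟩ := hT
  simpa [hTs] using traj_reach hstep t T

lemma traj_dist_step (hstep : ∀ t, z (t+1) = z t ∨ G.Adj (z t) (z (t+1)))
    (hT : ∃ T, z T = s) (t : ℕ) :
    G.dist (z t) s ≤ G.dist (z (t+1)) s + 1 := by
  rcases hstep t with h | h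
  · rw [h]; omega
  · have := dist_tri (⟨h.toWalk⟩ : G.Reachable (z t) (z (t+1))) (traj_reach_s hstep hT (t+1))
    have h2 := adj_dist_le_one h
    omega

lemma traj_dist_le (hstep : ∀ t, z (t+1) = z t ∨ G.Adj (z t) (z (t+1)))
    (hT : ∃ T, z T = s) {a b : ℕ} (hab : a ≤ b) :
    G.dist (z a) s ≤ G.dist (z b) s + (b - a) := by
  obtain ⟨n, rfl⟩ := Nat.exists_eq_add_of_le hab
  induction n with
  | zero => simp
  | succ n ih =>
      have h1 := traj_dist_step hstep hT (a+n)
      have : a + (n+1) = (a+n) + 1 := by omega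
      rw [this]
      omega

end Traj

section AuxY
variable {J : Type*} {I : WGPInstance V J} {y : J → ℕ → V}

/-- first time the packet is ever at the sink -/
noncomputable def arr (I : WGPInstance V J) (y : J → ℕ → V) (k : J) : ℕ :=
  sInf {t | y k t = I.s}

namespace WGPAux

lemma ystep (hy : I.Feasible y) (k : J) :
    ∀ t, y k (t+1) = y k t ∨ I.G.Adj (y k t) (y k (t+1)) := fun t => hy.2.1 k t

lemma yreach (hy : I.Feasible y) (k : J) (t : ℕ) : I.G.Reachable (y k t) I.s :=
  traj_reach_s (ystep hy k) (hy.2.2.2 k) t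

lemma arr_mem (hy : I.Feasible y) (k : J) : y k (arr I y k) = I.s :=
  Nat.sInf_mem (hy.2.2.2 k)

lemma arr_dist (hy : I.Feasible y) (k : J) : I.G.dist (y k (arr I y k)) I.s = 0 := by
  rw [arr_mem hy k]; exact SimpleGraph.dist_self

lemma arr_gt (hy : I.Feasible y) {k : J} (ho : I.o k ≠ I.s) : I.r k < arr I y k := by
  by_contra h
  push_neg at h
  have := hy.1 k (arr I y k) h
  rw [arr_mem hy k] at this
  exact ho this.symm

lemma arr_ge (hy : I.Feasible y) {k : J} (ho : I.o k ≠ I.s) :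
    I.r k + I.G.dist (I.o k) I.s ≤ arr I y k := by
  have h1 := arr_gt hy ho
  have h2 := traj_dist_le (ystep hy k) (hy.2.2.2 k) (le_of_lt h1)
  rw [hy.1 k (I.r k) le_rfl] at h2
  rw [arr_mem hy k, SimpleGraph.dist_self] at h2
  omega

lemma completion_set_nonempty (hy : I.Feasible y) (k : J) :
    {t | I.r k ≤ t ∧ y k t = I.s}.Nonempty := by
  obtain ⟨T, hT⟩ := hy.2.2.2 k
  rcases le_total (I.r k) T with h | h
  · exact ⟨T, h, hT⟩
  · have : I.o k = I.s := by rw [← hy.1 k T h]; exact hT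
    exact ⟨I.r k, le_rfl, by rw [hy.1 k (I.r k) le_rfl]; exact this⟩

lemma completion_mem (hy : I.Feasible y) (k : J) :
    I.r k ≤ I.completion y k ∧ y k (I.completion y k) = I.s :=
  Nat.sInf_mem (completion_set_nonempty hy k)

lemma arr_le_completion (hy : I.Feasible y) (k : J) :
    arr I y k ≤ I.completion y k :=
  Nat.sInf_le (completion_mem hy k).2

lemma completion_ge (hy : I.Feasible y) (k : J) :
    I.r k + I.G.dist (I.o k) I.s ≤ I.completion y k := by
  by_cases ho : I.o k = I.s
  · rw [ho, SimpleGraph.dist_self]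
    simpa using (completion_mem hy k).1
  · exact le_trans (arr_ge hy ho) (arr_le_completion hy k)

lemma arr_inj (hy : I.Feasible y) (hdI : 1 ≤ I.dI) {k k' : J}
    (hk : I.o k ≠ I.s) (hk' : I.o k' ≠ I.s) (hne : k ≠ k')
    (heq : arr I y k = arr I y k') : False := by
  set τ := arr I y k with hτ
  have hτ1 : 1 ≤ τ := by
    have := arr_gt hy hk; omega
  have hprev : ∀ m, I.o m ≠ I.s → arr I y m = τ → y m (τ - 1) ≠ I.s := by
    intro m hm ha
    intro hcon
    have : arr I y m ≤ τ - 1 := Nat.sInf_le hcon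
    omega
  have hk1 : y k (τ - 1) ≠ I.s := hprev k hk rfl
  have hk'1 : y k' (τ - 1) ≠ I.s := hprev k' hk' heq.symm
  have hks : y k τ = I.s := arr_mem hy k
  have hk's : y k' τ = I.s := by rw [heq]; exact arr_mem hy k'
  have ht : τ - 1 + 1 = τ := by omega
  have hmove1 : y k (τ - 1 + 1) ≠ y k (τ - 1) := by rw [ht, hks]; exact fun h => hk1 h.symm
  have hmove2 : y k' (τ - 1 + 1) ≠ y k' (τ - 1) := by rw [ht, hk's]; exact fun h => hk'1 h.symm
  have hint := (hy.2.2.1 k k' (τ-1) hne hmove1 hmove2).2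
  apply hint
  left
  rw [ht, hks]
  have hadj : I.G.Adj (y k' (τ-1)) I.s := by
    rcases ystep hy k' (τ-1) with h | h
    · rw [ht] at h; rw [h] at hk's; exact absurd hk's hk'1
    · rw [ht, hk's] at h; exact h
  rw [SimpleGraph.edist_comm]
  calc I.G.edist I.s (y k' (τ-1)) = 1 := by
        rw [SimpleGraph.edist_eq_one_iff_adj]; exact hadj.symm
    _ ≤ (I.dI : ℕ∞) := by exact_mod_cast Nat.one_le_cast.mpr hdI

end WGPAux
/-- first time packet k is at distance < p from the sink -/
noncomputable def cross (I : WGPInstance V J) (y : J → ℕ → V) (k : J) (p : ℕ) : ℕ :=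
  sInf {t | I.G.dist (y k t) I.s < p}

namespace WGPAux

lemma cross_nonempty (hy : I.Feasible y) (k : J) {p : ℕ} (hp1 : 1 ≤ p) :
    {t | I.G.dist (y k t) I.s < p}.Nonempty :=
  ⟨arr I y k, by simpa [arr_dist hy k] using (show 0 < p by omega)⟩

lemma cross_lt (hy : I.Feasible y) (k : J) {p : ℕ} (hp1 : 1 ≤ p) :
    I.G.dist (y k (cross I y k p)) I.s < p :=
  Nat.sInf_mem (cross_nonempty hy k hp1)

lemma cross_le_arr (hy : I.Feasible y) (k : J) {p : ℕ} (hp1 : 1 ≤ p) :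
    cross I y k p ≤ arr I y k :=
  Nat.sInf_le (by simpa [Set.mem_setOf_eq, arr_dist hy k] using (show 0 < p by omega))

lemma cross_gt (hy : I.Feasible y) {k : J} {p : ℕ} (hp1 : 1 ≤ p)
    (hpδ : p ≤ I.G.dist (I.o k) I.s) : I.r k < cross I y k p := by
  by_contra h
  push_neg at h
  have h2 := cross_lt hy k hp1
  rw [hy.1 k _ h] at h2
  omega

lemma cross_spec (hy : I.Feasible y) {k : J} {p : ℕ} (hp1 : 1 ≤ p)
    (hpδ : p ≤ I.G.dist (I.o k) I.s) :
    I.G.dist (y k (cross I y k p - 1)) I.s = p ∧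
    I.G.dist (y k (cross I y k p)) I.s = p - 1 ∧
    y k (cross I y k p - 1 + 1) ≠ y k (cross I y k p - 1) := by
  set τ := cross I y k p with hτ
  have hτ1 : 1 ≤ τ := le_trans (by omega) (cross_gt hy hp1 hpδ)
  have hlt := cross_lt hy k hp1
  rw [← hτ] at hlt
  have hge : p ≤ I.G.dist (y k (τ - 1)) I.s := by
    by_contra h
    push_neg at h
    have : τ ≤ τ - 1 := Nat.sInf_le h
    omega
  have hstep := traj_dist_step (ystep hy k) (hy.2.2.2 k) (τ - 1)
  have ht : τ - 1 + 1 = τ := by omega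
  rw [ht] at hstep
  refine ⟨by omega, by omega, ?_⟩
  intro hcon
  rw [ht] at hcon
  rw [hcon] at hlt
  omega

end WGPAux

end AuxY

section AuxX
variable {J : Type*} {I : WGPInstance V J} {x : J → ℕ → V} {prio : J → ℕ}

namespace WGPAux

lemma xstep (hx : I.FeasibleSpeed 5 x) (c : J) :
    ∀ t, x c (t+1) = x c t ∨ I.G.Adj (x c t) (x c (t+1)) := fun t => hx.2.1 c t

lemma xreach (hx : I.FeasibleSpeed 5 x) (c : J) (t : ℕ) : I.G.Reachable (x c t) I.s :=
  traj_reach_s (xstep hx c) (hx.2.2.2 c) t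

lemma sink_stay (hpg : I.PriorityGreedySpeed 5 prio x) {c : J} {T : ℕ}
    (hT : x c T = I.s) : ∀ t, T ≤ t → x c t = I.s := by
  have key : ∀ n, x c (T + n) = I.s := by
    intro n
    induction n with
    | zero => simpa using hT
    | succ n ih => exact hpg.2.1 c (T + n) ih
  intro t ht
  obtain ⟨n, rfl⟩ := Nat.exists_eq_add_of_le ht
  exact key n

lemma o_ne_s (hx : I.FeasibleSpeed 5 x) (hpg : I.PriorityGreedySpeed 5 prio x)
    {c : J} {t : ℕ} (h : x c t ≠ I.s) : I.o c ≠ I.s := by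
  intro ho
  have h0 : x c 0 = I.o c := hx.1 c 0 (by push_cast; positivity)
  exact h (sink_stay hpg (h0.trans ho) t (Nat.zero_le t))

lemma move_spec (hx : I.FeasibleSpeed 5 x) (hpg : I.PriorityGreedySpeed 5 prio x)
    {c : J} {t : ℕ} (h : x c (t+1) ≠ x c t) :
    I.G.dist (x c (t+1)) I.s + 1 = I.G.dist (x c t) I.s ∧ 5 * I.r c ≤ t ∧ x c t ≠ I.s := by
  obtain ⟨⟨h1, h2⟩, h3⟩ := hpg.2.2.1 c t h
  refine ⟨h3, by exact_mod_cast h1, h2⟩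

lemma xdist_mono (hx : I.FeasibleSpeed 5 x) (hpg : I.PriorityGreedySpeed 5 prio x)
    (c : J) {t1 t2 : ℕ} (h : t1 ≤ t2) :
    I.G.dist (x c t2) I.s ≤ I.G.dist (x c t1) I.s := by
  have key : ∀ n, I.G.dist (x c (t1 + n)) I.s ≤ I.G.dist (x c t1) I.s := by
    intro n
    induction n with
    | zero => simp
    | succ n ih =>
        have hst : I.G.dist (x c (t1 + n + 1)) I.s ≤ I.G.dist (x c (t1 + n)) I.s := by
          by_cases hm : x c (t1 + n + 1) = x c (t1 + n)
          · rw [hm]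
          · have := (move_spec hx hpg hm).1; omega
        calc I.G.dist (x c (t1 + (n+1))) I.s = I.G.dist (x c (t1 + n + 1)) I.s := by
              rw [Nat.add_assoc]
          _ ≤ I.G.dist (x c (t1 + n)) I.s := hst
          _ ≤ _ := ih
  obtain ⟨n, rfl⟩ := Nat.exists_eq_add_of_le h
  exact key n

lemma xdist_le_delta (hx : I.FeasibleSpeed 5 x) (hpg : I.PriorityGreedySpeed 5 prio x)
    (c : J) (t : ℕ) : I.G.dist (x c t) I.s ≤ I.G.dist (I.o c) I.s := by
  have h0 : x c 0 = I.o c := hx.1 c 0 (by push_cast; positivity)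
  simpa [h0] using xdist_mono hx hpg c (Nat.zero_le t)

lemma blocked_spec (hx : I.FeasibleSpeed 5 x) (hpg : I.PriorityGreedySpeed 5 prio x)
    {c : J} {t : ℕ} (hrel : 5 * I.r c ≤ t) (hs : x c t ≠ I.s)
    (hstay : x c (t+1) = x c t) :
    ∃ k, prio k < prio c ∧ x k (t+1) ≠ x k t ∧
      I.G.dist (x c t) I.s ≤ I.G.dist (x k t) I.s + (I.dI + 1) := by
  obtain ⟨v, hadj, hv⟩ := exists_improving (xreach hx c t) hs
  have hact : I.SpeedActive 5 x c t :=
    ⟨by exact_mod_cast hrel, hs⟩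
  obtain ⟨k, hk1, hk2, hk3⟩ := hpg.2.2.2 c t hact hstay v hadj hv
  refine ⟨k, hk1, hk2, ?_⟩
  have hreach_ck : I.G.Reachable (x c t) (x k t) := (xreach hx c t).trans (xreach hx k t).symm
  have htri : I.G.dist (x c t) I.s ≤ I.G.dist (x c t) (x k t) + I.G.dist (x k t) I.s :=
    dist_tri hreach_ck (xreach hx k t)
  have hck : I.G.dist (x c t) (x k t) ≤ I.dI + 1 := by
    rcases hk3 with h | h
    · -- edist (x k t) v ≤ dI
      have h1 : I.G.dist (x k t) v ≤ I.dI := dist_le_of_edist_le h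
      have h2 : I.G.dist (x c t) v ≤ 1 := adj_dist_le_one hadj
      have hrkv : I.G.Reachable (x k t) v :=
        SimpleGraph.reachable_of_edist_ne_top (ne_top_of_le_ne_top (ENat.coe_ne_top _) h)
      have hr_cv : I.G.Reachable (x c t) v := ⟨hadj.toWalk⟩
      have htri2 := dist_tri hr_cv hrkv.symm
      rw [SimpleGraph.dist_comm (G := I.G) (u := v) (v := x k t)] at htri2
      omega
    · -- edist (x c t) (x k (t+1)) ≤ dI
      have h1 : I.G.dist (x c t) (x k (t+1)) ≤ I.dI := dist_le_of_edist_le h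
      have hadj2 : I.G.Adj (x k (t+1)) (x k t) := by
        rcases xstep hx k t with he | he
        · exact absurd he hk2
        · exact he.symm
      have h2 : I.G.dist (x k (t+1)) (x k t) ≤ 1 := adj_dist_le_one hadj2
      have hr1 : I.G.Reachable (x c t) (x k (t+1)) := (xreach hx c t).trans (xreach hx k (t+1)).symm
      have hr2 : I.G.Reachable (x k (t+1)) (x k t) := ⟨hadj2.toWalk⟩
      have := dist_tri hr1 hr2
      omega
  omega

end WGPAux
namespace WGPAux

lemma chainQ (hx : I.FeasibleSpeed 5 x) (hpg : I.PriorityGreedySpeed 5 prio x) :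
    ∀ t c, 5 * I.r c ≤ t → x c t ≠ I.s →
    ∃ (b : J) (S : Finset J), prio b ≤ prio c ∧ I.o b ≠ I.s ∧
      (∀ k ∈ S, prio k ≤ prio c ∧ prio b < prio k ∧ I.o k ≠ I.s) ∧
      t + I.G.dist (x c t) I.s ≤ 5 * I.r b + I.G.dist (I.o b) I.s +
        ∑ k ∈ S, (min (I.G.dist (I.o k) I.s) (I.dI + 1) + 1) := by
  classical
  intro t
  induction t using Nat.strong_induction_on with
  | _ t IH =>
    intro c hrel hs
    by_cases hbase : 5 * I.r c ≤ t - 1 ∧ t ≠ 0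
    · obtain ⟨ht', ht0⟩ := hbase
      obtain ⟨u, rfl⟩ : ∃ u, t = u + 1 := ⟨t - 1, by omega⟩
      have hu : u + 1 - 1 = u := by omega
      rw [hu] at ht'
      have hsprev : x c u ≠ I.s := by
        intro hcon
        exact hs (sink_stay hpg hcon (u+1) (by omega))
      by_cases hm : x c (u+1) = x c u
      · -- c stayed at round u: it was blocked
        obtain ⟨k, hk1, hk2, hk3⟩ := blocked_spec hx hpg ht' hsprev hm
        obtain ⟨hkd, hkrel, hks⟩ := move_spec hx hpg hk2
        obtain ⟨b, S', hb1, hb2, hb3, hb4⟩ := IH u (by omega) k hkrel hks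
        have hcS' : c ∉ S' := by
          intro hc
          have := (hb3 c hc).1
          omega
        refine ⟨b, insert c S', by omega, hb2, ?_, ?_⟩
        · intro k' hk'
          rcases Finset.mem_insert.mp hk' with rfl | hk'
          · exact ⟨le_rfl, by omega, o_ne_s hx hpg hsprev⟩
          · have := hb3 k' hk'
            exact ⟨by omega, this.2.1, this.2.2⟩
        · rw [Finset.sum_insert hcS']
          have hA : I.G.dist (x c u) I.s ≤ I.G.dist (I.o c) I.s := xdist_le_delta hx hpg c u
          have hkey : I.G.dist (x c u) I.s ≤ I.G.dist (x k u) I.s +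
              min (I.G.dist (I.o c) I.s) (I.dI + 1) := by
            rcases le_total (I.G.dist (I.o c) I.s) (I.dI + 1) with h | h
            · rw [min_eq_left h]; omega
            · rw [min_eq_right h]; omega
          rw [hm]
          omega
      · -- c moved at round u
        have hmd := (move_spec hx hpg hm).1
        obtain ⟨b, S, hb1, hb2, hb3, hb4⟩ := IH u (by omega) c ht' hsprev
        exact ⟨b, S, hb1, hb2, hb3, by omega⟩
    · -- base case: t = 5 * r c
      have ht : t = 5 * I.r c := by omega
      have hxo : x c t = I.o c := hx.1 c t (by rw [ht]; push_cast; linarith)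
      refine ⟨c, ∅, le_rfl, by rwa [hxo] at hs, by simp, ?_⟩
      rw [hxo, ht]
      simp

end WGPAux

end AuxX

section AuxMain
variable {J : Type*} {I : WGPInstance V J} {x y : J → ℕ → V} {prio : J → ℕ}

namespace WGPAux

lemma prio_rel (hprio : ∀ a b, I.r a < I.r b → prio a < prio b) {a b : J}
    (h : prio a ≤ prio b) : I.r a ≤ I.r b := by
  by_contra hc
  push_neg at hc
  have := hprio b a hc
  omega

lemma min_tri {δ dI : ℕ} (hdI : 1 ≤ dI) : min δ (dI + 1) ≤ 3 * min δ ((dI + 1) / 2) := by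
  rcases le_total δ ((dI + 1) / 2) with h | h
  · rw [min_eq_left h]
    have : min δ (dI + 1) ≤ δ := min_le_left _ _
    omega
  · rw [min_eq_right h]
    have : min δ (dI + 1) ≤ dI + 1 := min_le_right _ _
    omega

lemma main_bound (hy : I.Feasible y) (hx : I.FeasibleSpeed 5 x)
    (hprio : ∀ a b, I.r a < I.r b → prio a < prio b)
    (hpg : I.PriorityGreedySpeed 5 prio x) (hdI : 1 ≤ I.dI)
    (j : J) (M : ℕ) (hM1 : ∀ k, I.r k ≤ I.r j → I.completion y k ≤ M)
    (hM2 : I.r j ≤ M) :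
    I.gridCompletion 5 x j ≤ 5 * M := by
  classical
  have hne : {t : ℕ | 5 * (I.r j : ℝ) ≤ (t : ℕ) ∧ x j t = I.s}.Nonempty := by
    obtain ⟨T, hT⟩ := hx.2.2.2 j
    refine ⟨max T (5 * I.r j), ?_, sink_stay hpg hT _ (le_max_left _ _)⟩
    have : (5 * I.r j : ℕ) ≤ max T (5 * I.r j) := le_max_right _ _
    push_cast
    exact_mod_cast (by exact_mod_cast this : ((5 * I.r j : ℕ) : ℝ) ≤ (max T (5 * I.r j) : ℕ))
  obtain ⟨C, hC, hCmem⟩ : ∃ C, I.gridCompletion 5 x j = C ∧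
      (5 * (I.r j : ℝ) ≤ (C : ℝ) ∧ x j C = I.s) := ⟨_, rfl, Nat.sInf_mem hne⟩
  have hCle : ∀ t : ℕ, 5 * (I.r j : ℝ) ≤ (t : ℝ) ∧ x j t = I.s → C ≤ t :=
    fun t ht => le_trans (le_of_eq hC.symm) (Nat.sInf_le ht)
  rw [hC]
  have hC5 : 5 * I.r j ≤ C := by exact_mod_cast hCmem.1
  by_cases ho : I.o j = I.s
  · have : C ≤ 5 * I.r j := hCle (5 * I.r j)
      ⟨by push_cast; exact le_rfl,
       by rw [hx.1 j (5 * I.r j) (by push_cast; exact le_rfl)]; exact ho⟩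
    omega
  · -- main case
    have hCgt : 5 * I.r j < C := by
      rcases Nat.lt_or_ge (5 * I.r j) C with h | h
      · exact h
      · exfalso
        have hCe : C = 5 * I.r j := by omega
        have := hx.1 j C (by rw [hCe]; push_cast; exact le_rfl)
        rw [hCmem.2] at this
        exact ho this.symm
    have hprev : x j (C - 1) ≠ I.s := by
      intro hcon
      have hle : C ≤ C - 1 := by
        refine hCle (C - 1) ⟨?_, hcon⟩
        have h9 : (5 * I.r j : ℕ) ≤ C - 1 := by omega
        exact_mod_cast (by exact_mod_cast h9 : ((5 * I.r j : ℕ) : ℝ) ≤ ((C - 1 : ℕ) : ℝ))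
      omega
    obtain ⟨b, S, hb1, hb2, hb3, hb4⟩ :=
      chainQ hx hpg (C - 1) j (by omega) hprev
    have hmove : x j (C - 1 + 1) ≠ x j (C - 1) := by
      rw [(by omega : C - 1 + 1 = C), hCmem.2]
      exact fun h => hprev h.symm
    have hd1 : I.G.dist (x j (C - 1)) I.s = 1 := by
      have := (move_spec hx hpg hmove).1
      rw [(by omega : C - 1 + 1 = C), hCmem.2, SimpleGraph.dist_self] at this
      omega
    rw [hd1] at hb4
    have hmain : C ≤ 5 * I.r b + I.G.dist (I.o b) I.s +
        ∑ k ∈ S, (min (I.G.dist (I.o k) I.s) (I.dI + 1) + 1) := by omega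
    -- release date comparisons
    have hrb : I.r b ≤ I.r j := prio_rel hprio hb1
    have hrbM : I.r b ≤ M := le_trans hrb hM2
    have hSr : ∀ k ∈ S, I.r b ≤ I.r k ∧ I.r k ≤ I.r j := fun k hk =>
      ⟨prio_rel hprio (le_of_lt (hb3 k hk).2.1), prio_rel hprio (hb3 k hk).1⟩
    have hSo : ∀ k ∈ S, I.o k ≠ I.s := fun k hk => (hb3 k hk).2.2
    have hδpos : ∀ k ∈ S, 1 ≤ I.G.dist (I.o k) I.s := by
      intro k hk
      have hreach : I.G.Reachable (I.o k) I.s := by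
        have h0 : y k 0 = I.o k := hy.1 k 0 (Nat.zero_le _)
        rw [← h0]
        exact yreach hy k 0
      exact hreach.pos_dist_of_ne (hSo k hk)
    -- (1) first packet
    have hδb : I.r b + I.G.dist (I.o b) I.s ≤ M :=
      le_trans (completion_ge hy b) (hM1 b hrb)
    -- (2) |S| ≤ M - r b  via distinct arrival times
    have hcard : S.card ≤ M - I.r b := by
      have hmaps : ∀ k ∈ S, arr I y k ∈ Finset.Ioc (I.r b) M := by
        intro k hk
        rw [Finset.mem_Ioc]
        constructor
        · have h1 := arr_ge hy (hSo k hk)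
          have h2 := hδpos k hk
          have h3 := (hSr k hk).1
          omega
        · exact le_trans (arr_le_completion hy k) (hM1 k (hSr k hk).2)
      have hinj : Set.InjOn (fun k => arr I y k) ↑S := by
        intro k hk k' hk' heq
        by_contra hkk
        exact arr_inj hy hdI (hSo k (Finset.mem_coe.mp hk))
          (hSo k' (Finset.mem_coe.mp hk')) hkk heq
      have h := Finset.card_le_card_of_injOn _ hmaps hinj
      simpa [Nat.card_Ioc] using h
    -- (3) crossing moves near the sink
    set ρ := (I.dI + 1) / 2 with hρ
    have hρ1 : 1 ≤ ρ := by omega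
    have hcross : ∑ k ∈ S, min (I.G.dist (I.o k) I.s) ρ ≤ M - I.r b := by
      have hmaps : ∀ q ∈ S.sigma (fun k => Finset.Icc 1 (min (I.G.dist (I.o k) I.s) ρ)),
          (fun q : (_ : J) × ℕ => cross I y q.1 q.2 - 1) q ∈ Finset.Ico (I.r b) M := by
        rintro ⟨k, p⟩ hq
        dsimp only
        rw [Finset.mem_sigma, Finset.mem_Icc] at hq
        dsimp only at hq
        obtain ⟨hkS, hp1, hp2⟩ := hq
        have hpδ : p ≤ I.G.dist (I.o k) I.s := le_trans hp2 (min_le_left _ _)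
        have hgt := cross_gt hy hp1 hpδ
        have hle : cross I y k p ≤ M :=
          le_trans (cross_le_arr hy k hp1)
            (le_trans (arr_le_completion hy k) (hM1 k (hSr k hkS).2))
        rw [Finset.mem_Ico]
        have := (hSr k hkS).1
        omega
      have hinj : Set.InjOn (fun q : (_ : J) × ℕ => cross I y q.1 q.2 - 1)
          ↑(S.sigma (fun k => Finset.Icc 1 (min (I.G.dist (I.o k) I.s) ρ))) := by
        rintro ⟨k, p⟩ hq ⟨k', p'⟩ hq' heq
        rw [Finset.mem_coe, Finset.mem_sigma, Finset.mem_Icc] at hq hq'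
        dsimp only at hq hq'
        obtain ⟨hkS, hp1, hp2⟩ := hq
        obtain ⟨hkS', hp1', hp2'⟩ := hq'
        have hpδ : p ≤ I.G.dist (I.o k) I.s := le_trans hp2 (min_le_left _ _)
        have hpδ' : p' ≤ I.G.dist (I.o k') I.s := le_trans hp2' (min_le_left _ _)
        have hpρ : p ≤ ρ := le_trans hp2 (min_le_right _ _)
        have hpρ' : p' ≤ ρ := le_trans hp2' (min_le_right _ _)
        have hgt := cross_gt hy hp1 hpδ
        have hgt' := cross_gt hy hp1' hpδ'
        have hsp := cross_spec hy hp1 hpδ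
        have hsp' := cross_spec hy hp1' hpδ'
        simp only at heq
        have hτeq : cross I y k p = cross I y k' p' := by omega
        by_cases hkk : k = k'
        · subst hkk
          have h1 := hsp.2.1
          have h2 := hsp'.2.1
          rw [hτeq] at h1
          have hpp : p = p' := by omega
          subst hpp
          rfl
        · exfalso
          set τ := cross I y k p with hτ
          have hmv := hsp.2.2
          have hmv' := hsp'.2.2
          rw [← hτeq] at hmv' hsp'
          have hint := (hy.2.2.1 k k' (τ - 1) hkk hmv hmv').2
          apply hint
          left
          have hτ1 : τ - 1 + 1 = τ := by omega
          rw [hτ1]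
          -- edist (y k' (τ-1)) (y k τ) ≤ dI
          have hd1 : I.G.dist (y k' (τ - 1)) I.s = p' := hsp'.1
          have hd2 : I.G.dist (y k τ) I.s = p - 1 := hsp.2.1
          have hr1 : I.G.Reachable (y k' (τ - 1)) I.s := yreach hy k' (τ - 1)
          have hr2 : I.G.Reachable I.s (y k τ) := (yreach hy k τ).symm
          calc I.G.edist (y k' (τ - 1)) (y k τ)
              ≤ I.G.edist (y k' (τ - 1)) I.s + I.G.edist I.s (y k τ) :=
                SimpleGraph.edist_triangle
            _ = ((p' : ℕ∞)) + ((p - 1 : ℕ) : ℕ∞) := by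
                rw [edist_coe_dist hr1, hd1, edist_coe_dist hr2,
                  SimpleGraph.dist_comm, hd2]
            _ ≤ (I.dI : ℕ∞) := by
                have : p' + (p - 1) ≤ I.dI := by omega
                exact_mod_cast this
      have hc := Finset.card_le_card_of_injOn _ hmaps hinj
      rw [Finset.card_sigma] at hc
      simp only [Nat.card_Icc, Nat.card_Ico] at hc
      calc ∑ k ∈ S, min (I.G.dist (I.o k) I.s) ρ
          = ∑ k ∈ S, (min (I.G.dist (I.o k) I.s) ρ + 1 - 1) := by
            apply Finset.sum_congr rfl; intro k hk; omega
        _ ≤ M - I.r b := hc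
    -- assemble
    have hsum : ∑ k ∈ S, (min (I.G.dist (I.o k) I.s) (I.dI + 1) + 1)
        ≤ 3 * (∑ k ∈ S, min (I.G.dist (I.o k) I.s) ρ) + S.card := by
      rw [Finset.sum_add_distrib, Finset.sum_const, smul_eq_mul, mul_one, Finset.mul_sum]
      have : ∀ k ∈ S, min (I.G.dist (I.o k) I.s) (I.dI + 1)
          ≤ 3 * min (I.G.dist (I.o k) I.s) ρ := fun k _ => min_tri hdI
      have := Finset.sum_le_sum this
      omega
    omega

end WGPAux
end AuxMain

end AuxGraph

open WGPInstance in
/-- For every interference radius `d_I ≥ 1`, the algorithm 5-FIFO is a 5-speed optimal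
algorithm for both C-WGP and F-WGP: on every WGP instance, for every 5-speed schedule
`x` that 5-FIFO may produce and every feasible unit-speed schedule `y`, the maximum
completion time of `x` (in original time units) is at most the maximum completion time
of `y`, and the maximum flow time of `x` is at most the maximum flow time of `y`. -/
theorem fiveFifo_speed_optimal {V J : Type*} [Fintype J]
    (I : WGPInstance V J) (hdI : 1 ≤ I.dI)
    (x : J → ℕ → V) (hx : I.FeasibleSpeed 5 x) (hfifo : I.FIFOSpeed 5 x)
    (y : J → ℕ → V) (hy : I.Feasible y) :
    ((Finset.univ.sup (I.gridCompletion 5 x) : ℕ) : ℝ) / 5 ≤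
        ((Finset.univ.sup (I.completion y) : ℕ) : ℝ) ∧
    (⨆ j, (((I.gridCompletion 5 x j : ℕ) : ℝ) / 5 - (I.r j : ℝ))) ≤
        ⨆ j, (((I.completion y j : ℕ) : ℝ) - (I.r j : ℝ)) := by
  classical
  obtain ⟨prio, hprio, hpg⟩ := hfifo
  set Cstar := Finset.univ.sup (I.completion y) with hCstar
  set F := Finset.univ.sup (I.flow y) with hF
  have hcomp_eq : ∀ k, I.completion y k = I.r k + I.flow y k := by
    intro k
    have := (WGPAux.completion_mem hy k).1
    unfold WGPInstance.flow
    omega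
  -- the two per-packet bounds
  have hbound1 : ∀ j : J, I.gridCompletion 5 x j ≤ 5 * Cstar := by
    intro j
    refine WGPAux.main_bound hy hx hprio hpg hdI j Cstar ?_ ?_
    · intro k _
      exact Finset.le_sup (Finset.mem_univ k)
    · exact le_trans (WGPAux.completion_mem hy j).1 (Finset.le_sup (Finset.mem_univ j))
  have hbound2 : ∀ j : J, I.gridCompletion 5 x j ≤ 5 * (I.r j + F) := by
    intro j
    refine WGPAux.main_bound hy hx hprio hpg hdI j (I.r j + F) ?_ (by omega)
    · intro k hk
      have h1 : I.flow y k ≤ F := Finset.le_sup (Finset.mem_univ k)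
      have h2 := hcomp_eq k
      omega
  constructor
  · -- completion time objective
    have hsup : Finset.univ.sup (I.gridCompletion 5 x) ≤ 5 * Cstar :=
      Finset.sup_le fun j _ => hbound1 j
    rw [div_le_iff₀ (by norm_num : (0:ℝ) < 5)]
    calc ((Finset.univ.sup (I.gridCompletion 5 x) : ℕ) : ℝ)
        ≤ ((5 * Cstar : ℕ) : ℝ) := by exact_mod_cast hsup
      _ = (Cstar : ℝ) * 5 := by push_cast; ring
  · -- flow time objective
    rcases isEmpty_or_nonempty J with hJ | hJ
    · rw [iSup_of_empty', iSup_of_empty']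
    · refine ciSup_le fun j => ?_
      have hj : ((I.gridCompletion 5 x j : ℕ) : ℝ) / 5 - (I.r j : ℝ) ≤ (F : ℝ) := by
        have h1 : ((I.gridCompletion 5 x j : ℕ) : ℝ) ≤ ((5 * (I.r j + F) : ℕ) : ℝ) := by
          exact_mod_cast hbound2 j
        rw [sub_le_iff_le_add, div_le_iff₀ (by norm_num : (0:ℝ) < 5)]
        push_cast at h1 ⊢
        linarith
      refine le_trans hj ?_
      obtain ⟨j0, _, hj0⟩ := Finset.exists_mem_eq_sup Finset.univ Finset.univ_nonempty (I.flow y)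
      have hflow : (F : ℝ) = ((I.completion y j0 : ℕ) : ℝ) - (I.r j0 : ℝ) := by
        rw [hF, hj0]
        have := hcomp_eq j0
        push_cast [this]
        ring
      rw [hflow]
      exact le_ciSup (f := fun k : J => ((I.completion y k : ℕ) : ℝ) - (I.r k : ℝ))
        (Set.Finite.bddAbove (Set.finite_range _)) j0
end
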